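/- arXiv:2605.14342 — 6 statements merged into one kernel-verified Lean document; each statement's English description precedes it below -/
import Mathlib

section
/- For all integers n ≥ 0 and k ≥ 1, the Fibonomial coefficient C(n+1, k)_F equals (−1)^{k(k−1)/2} times the determinant of the k×k matrix A (rows and columns indexed 1,…,k) defined by A(i,j) = C(n+i−j+1, n)_F for i ≥ j, A(i, i+1) = 1, and A(i,j) = 0 for j > i+1. -/
/-- The Fibonomial coefficient `C(n,k)_F = ∏_{r=1}^{k} F_{n-r+1}/F_r`, as a real number.
It equals `0` when `k > n` and `1` when `k = 0`. -/
noncomputable def fibonomial (n k : ℕ) : ℝ :=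
  ∏ r ∈ Finset.range k, (Nat.fib (n - r) : ℝ) / (Nat.fib (r + 1) : ℝ)

open Finset Real goldenRatio

lemma fib_cast_ne (m : ℕ) (hm : 1 ≤ m) : ((Nat.fib m : ℝ)) ≠ 0 := by
  have := Nat.fib_pos.mpr hm
  positivity

lemma binet (a b : ℕ) : (Nat.fib (a+b) : ℝ) = ψ^b * Nat.fib a + φ^a * Nat.fib b := by
  rw [Real.coe_fib_eq, Real.coe_fib_eq, Real.coe_fib_eq]
  have h5 : (√5 : ℝ) ≠ 0 := by positivity
  field_simp
  rw [pow_add, pow_add]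
  ring

lemma fibonomial_zero (n : ℕ) : fibonomial n 0 = 1 := by simp [fibonomial]

lemma fibonomial_of_lt {n k : ℕ} (h : n < k) : fibonomial n k = 0 := by
  refine Finset.prod_eq_zero (Finset.mem_range.mpr h) ?_
  simp [Nat.sub_self]

lemma fibonomial_self (n : ℕ) : fibonomial n n = 1 := by
  rw [fibonomial, Finset.prod_div_distrib]
  rw [show (∏ r ∈ Finset.range n, (Nat.fib (n - r) : ℝ)) =
      ∏ r ∈ Finset.range n, (Nat.fib (r+1) : ℝ) from ?_]
  · exact div_self (Finset.prod_ne_zero_iff.mpr fun r _ => fib_cast_ne _ (Nat.le_add_left 1 r))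
  · rw [← Finset.prod_range_reflect (fun r => (Nat.fib (r+1) : ℝ)) n]
    refine Finset.prod_congr rfl fun r hr => ?_
    have := Finset.mem_range.mp hr
    congr 2
    omega

lemma fibonomial_L1 (n k : ℕ) :
    fibonomial (n+1) (k+1) = (Nat.fib (n+1) : ℝ) / (Nat.fib (k+1) : ℝ) * fibonomial n k := by
  rw [fibonomial, fibonomial, Finset.prod_div_distrib, Finset.prod_div_distrib]
  rw [Finset.prod_range_succ' (fun r => (Nat.fib (n+1-r) : ℝ)) k]
  rw [Finset.prod_range_succ (fun r => (Nat.fib (r+1) : ℝ)) k]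
  rw [div_mul_div_comm]
  congr 1
  · rw [mul_comm]
    congr 1
    refine Finset.prod_congr rfl fun r _ => ?_
    congr 2
    omega
  · ring

lemma prod_tel (n k : ℕ) :
    Nat.fib (n+1-k) * ∏ r ∈ Finset.range k, Nat.fib (n+1-r)
      = Nat.fib (n+1) * ∏ r ∈ Finset.range k, Nat.fib (n-r) := by
  induction k with
  | zero => simp
  | succ k ih =>
    rw [Finset.prod_range_succ, Finset.prod_range_succ]
    calc Nat.fib (n+1-(k+1)) * ((∏ r ∈ Finset.range k, Nat.fib (n+1-r)) * Nat.fib (n+1-k))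
        = Nat.fib (n+1-(k+1)) * (Nat.fib (n+1-k) * ∏ r ∈ Finset.range k, Nat.fib (n+1-r)) := by
          ring
      _ = Nat.fib (n+1-(k+1)) * (Nat.fib (n+1) * ∏ r ∈ Finset.range k, Nat.fib (n-r)) := by
          rw [ih]
      _ = Nat.fib (n+1) * ((∏ r ∈ Finset.range k, Nat.fib (n-r)) * Nat.fib (n-k)) := by
          rw [show n+1-(k+1) = n-k from by omega]; ring

lemma fibonomial_L2 (n k : ℕ) (h : k ≤ n) :
    fibonomial (n+1) k = (Nat.fib (n+1) : ℝ) / (Nat.fib (n+1-k) : ℝ) * fibonomial n k := by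
  have hD : (∏ r ∈ Finset.range k, (Nat.fib (r+1) : ℝ)) ≠ 0 :=
    Finset.prod_ne_zero_iff.mpr fun r _ => fib_cast_ne _ (Nat.le_add_left 1 r)
  have hc := congrArg (Nat.cast : ℕ → ℝ) (prod_tel n k)
  push_cast at hc
  rw [fibonomial, fibonomial, Finset.prod_div_distrib, Finset.prod_div_distrib,
    div_mul_div_comm]
  rw [div_eq_div_iff hD (by
    exact mul_ne_zero (fib_cast_ne _ (by omega)) hD)]
  linear_combination (∏ r ∈ Finset.range k, (Nat.fib (r+1) : ℝ)) * hc

lemma rec_T (n j : ℕ) :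
    fibonomial (n+2) (j+1)
      = ψ^(j+1) * fibonomial (n+1) (j+1) + φ^(n+1-j) * fibonomial (n+1) j := by
  rcases le_or_gt j n with h | h
  · have e1 := fibonomial_L1 (n+1) j
    have e2 := fibonomial_L2 (n+1) (j+1) (by omega)
    rw [show n+1+1-(j+1) = n+1-j from by omega] at e2
    have hb : (Nat.fib (n+2) : ℝ) = ψ^(j+1) * Nat.fib (n+1-j) + φ^(n+1-j) * Nat.fib (j+1) := by
      have := binet (n+1-j) (j+1)
      rw [show n+1-j+(j+1) = n+2 from by omega] at this
      exact this
    have hA : (Nat.fib (n+1-j) : ℝ) ≠ 0 := fib_cast_ne _ (by omega)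
    have hB : (Nat.fib (j+1) : ℝ) ≠ 0 := fib_cast_ne _ (by omega)
    have hN : (Nat.fib (n+2) : ℝ) ≠ 0 := fib_cast_ne _ (by omega)
    have k1 : (Nat.fib (n+2) : ℝ) * fibonomial (n+1) (j+1)
        = Nat.fib (n+1-j) * fibonomial (n+2) (j+1) := by
      rw [e2]; field_simp; try ring
    have k2 : (Nat.fib (n+2) : ℝ) * fibonomial (n+1) j
        = Nat.fib (j+1) * fibonomial (n+2) (j+1) := by
      rw [e1]; field_simp; try ring
    apply mul_left_cancel₀ hN
    linear_combination fibonomial (n+2) (j+1) * hb - ψ^(j+1) * k1 - φ^(n+1-j) * k2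
  · have h' : j = n+1 ∨ n+1 < j := by omega
    rcases h' with h' | h'
    · subst h'
      rw [show n+1-(n+1) = 0 from by omega, fibonomial_self, fibonomial_self,
        fibonomial_of_lt (by omega)]
      simp
    · rw [fibonomial_of_lt (by omega), fibonomial_of_lt (by omega),
        fibonomial_of_lt (by omega)]
      simp

lemma rec_U (n m : ℕ) :
    fibonomial (n+m+2) (n+1)
      = ψ^(m+1) * fibonomial (n+m+1) n + φ^(n+1) * fibonomial (n+m+1) (n+1) := by
  have e1 := fibonomial_L1 (n+m+1) n
  rw [show n+m+1+1 = n+m+2 from rfl] at e1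
  have e2 := fibonomial_L2 (n+m+1) (n+1) (by omega)
  rw [show n+m+1+1-(n+1) = m+1 from by omega, show n+m+1+1 = n+m+2 from rfl] at e2
  have hb : (Nat.fib (n+m+2) : ℝ) = ψ^(m+1) * Nat.fib (n+1) + φ^(n+1) * Nat.fib (m+1) := by
    have := binet (n+1) (m+1)
    rw [show n+1+(m+1) = n+m+2 from by omega] at this
    exact this
  have hA : (Nat.fib (n+1) : ℝ) ≠ 0 := fib_cast_ne _ (by omega)
  have hB : (Nat.fib (m+1) : ℝ) ≠ 0 := fib_cast_ne _ (by omega)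
  have hN : (Nat.fib (n+m+2) : ℝ) ≠ 0 := fib_cast_ne _ (by omega)
  have k1 : (Nat.fib (n+m+2) : ℝ) * fibonomial (n+m+1) (n+1)
      = Nat.fib (m+1) * fibonomial (n+m+2) (n+1) := by
    rw [e2]; field_simp; try ring
  have k2 : (Nat.fib (n+m+2) : ℝ) * fibonomial (n+m+1) n
      = Nat.fib (n+1) * fibonomial (n+m+2) (n+1) := by
    rw [e1]; field_simp; try ring
  apply mul_left_cancel₀ hN
  linear_combination fibonomial (n+m+2) (n+1) * hb - ψ^(m+1) * k2 - φ^(n+1) * k1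

noncomputable def sgn (j : ℕ) : ℝ := (-1 : ℝ) ^ (j*(j+1)/2)

lemma sgn_succ (j : ℕ) : sgn (j+1) = sgn j * (-1 : ℝ)^(j+1) := by
  rw [sgn, sgn, ← pow_add]
  congr 1
  obtain ⟨a, ha⟩ := Nat.even_mul_succ_self j
  have h2 : (j+1)*(j+1+1) = j*(j+1) + 2*(j+1) := by ring
  omega

lemma sign_key (n j : ℕ) (h : j ≤ n+1) : ψ^j * φ^(n+1) = (-1 : ℝ)^j * φ^(n+1-j) := by
  have h1 : φ^(n+1) = φ^(n+1-j) * φ^j := by rw [← pow_add]; congr 1; omega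
  have h2 : (ψ*φ)^j = (-1:ℝ)^j := by rw [goldenConj_mul_goldenRatio]
  calc ψ^j * φ^(n+1) = (ψ*φ)^j * φ^(n+1-j) := by rw [h1, mul_pow]; ring
    _ = (-1:ℝ)^j * φ^(n+1-j) := by rw [h2]

lemma sum_id (k : ℕ) (hk : 1 ≤ k) (n : ℕ) :
    ∑ j ∈ Finset.range (k+1),
      sgn j * fibonomial (n+1) j * fibonomial (n + (k - j)) n = 0 := by
  induction n with
  | zero =>
    obtain ⟨k', rfl⟩ : ∃ k', k = k'+1 := ⟨k-1, by omega⟩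
    rw [Finset.sum_range_succ']
    rw [Finset.sum_range_succ']
    have hz : ∀ i ∈ Finset.range k', sgn (i+1+1) * fibonomial (0+1) (i+1+1)
        * fibonomial (0 + (k'+1 - (i+1+1))) 0 = 0 := by
      intro i _
      rw [fibonomial_of_lt (by omega)]
      ring
    rw [Finset.sum_eq_zero hz]
    simp [sgn, fibonomial, fibonomial_zero]
  | succ n ih =>
    have hW0 : fibonomial ((n+1) + (k - k)) (n+1) = 1 := by
      rw [Nat.sub_self, Nat.add_zero, fibonomial_self]
    have hV0 : fibonomial (n + (k - k)) n = 1 := by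
      rw [Nat.sub_self, Nat.add_zero, fibonomial_self]
    have hIH' : ∑ i ∈ Finset.range k, sgn i * fibonomial (n+1) i * fibonomial (n + (k-i)) n
        = -(sgn k * fibonomial (n+1) k) := by
      have h := ih
      rw [Finset.sum_range_succ, hV0] at h
      linarith
    have stepA : ∑ j ∈ Finset.range (k+1),
          sgn j * fibonomial (n+1+1) j * fibonomial ((n+1) + (k - j)) (n+1)
        = ∑ j ∈ Finset.range (k+1),
            sgn j * ψ^j * fibonomial (n+1) j * fibonomial ((n+1) + (k - j)) (n+1)
          + ∑ i ∈ Finset.range k,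
              sgn (i+1) * φ^(n+1-i) * fibonomial (n+1) i * fibonomial ((n+1) + (k - (i+1))) (n+1) := by
      rw [Finset.sum_range_succ' (fun j =>
        sgn j * fibonomial (n+1+1) j * fibonomial ((n+1) + (k - j)) (n+1)) k]
      rw [Finset.sum_range_succ' (fun j =>
        sgn j * ψ^j * fibonomial (n+1) j * fibonomial ((n+1) + (k - j)) (n+1)) k]
      have hterm : ∀ i ∈ Finset.range k,
          sgn (i+1) * fibonomial (n+1+1) (i+1) * fibonomial ((n+1) + (k - (i+1))) (n+1)
          = sgn (i+1) * ψ^(i+1) * fibonomial (n+1) (i+1) * fibonomial ((n+1) + (k - (i+1))) (n+1)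
            + sgn (i+1) * φ^(n+1-i) * fibonomial (n+1) i * fibonomial ((n+1) + (k - (i+1))) (n+1) := by
        intro i _
        rw [show n+1+1 = n+2 from rfl, rec_T n i]
        ring
      rw [Finset.sum_congr rfl hterm, Finset.sum_add_distrib]
      simp only [sgn, pow_zero, fibonomial_zero]
      ring
    have stepC : ∀ i ∈ Finset.range k,
        sgn i * ψ^i * fibonomial (n+1) i * fibonomial ((n+1) + (k - i)) (n+1)
        = ψ^k * (sgn i * fibonomial (n+1) i * fibonomial (n + (k-i)) n)
          + sgn i * ψ^i * φ^(n+1) * fibonomial (n+1) i * fibonomial ((n+1) + (k - (i+1))) (n+1) := by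
      intro i hi
      have hik : i < k := Finset.mem_range.mp hi
      have hU := rec_U n (k-1-i)
      rw [show n+(k-1-i)+2 = (n+1) + (k-i) from by omega,
          show (k-1-i)+1 = k-i from by omega,
          show n+(k-1-i)+1 = n + (k-i) from by omega] at hU
      have hY : fibonomial (n + (k-i)) (n+1) = fibonomial ((n+1) + (k - (i+1))) (n+1) := by
        rw [show n + (k-i) = (n+1) + (k-(i+1)) from by omega]
      rw [hU, hY]
      have hpow : ψ^i * ψ^(k-i) = ψ^k := by rw [← pow_add]; congr 1; omega
      linear_combination (sgn i * fibonomial (n+1) i * fibonomial (n + (k-i)) n) * hpow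
    have stepE : ∀ i ∈ Finset.range k,
        sgn i * ψ^i * φ^(n+1) * fibonomial (n+1) i * fibonomial ((n+1) + (k - (i+1))) (n+1)
        + sgn (i+1) * φ^(n+1-i) * fibonomial (n+1) i * fibonomial ((n+1) + (k - (i+1))) (n+1)
        = 0 := by
      intro i _
      rcases le_or_gt i (n+1) with h | h
      · have hs := sgn_succ i
        have hk2 := sign_key n i h
        rw [hs]
        linear_combination (sgn i * fibonomial (n+1) i
          * fibonomial ((n+1) + (k - (i+1))) (n+1)) * hk2
      · rw [fibonomial_of_lt (by omega)]
        ring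
    rw [stepA, Finset.sum_range_succ, Finset.sum_congr rfl stepC, Finset.sum_add_distrib,
      ← Finset.mul_sum, hIH', hW0]
    have : ∑ i ∈ Finset.range k,
        (sgn i * ψ^i * φ^(n+1) * fibonomial (n+1) i * fibonomial ((n+1) + (k - (i+1))) (n+1)
         + sgn (i+1) * φ^(n+1-i) * fibonomial (n+1) i * fibonomial ((n+1) + (k - (i+1))) (n+1))
        = 0 := Finset.sum_eq_zero stepE
    rw [Finset.sum_add_distrib] at this
    linarith [this]

theorem fibonomial_det_hessenberg (n k : ℕ) (hk : 1 ≤ k) :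
    fibonomial (n + 1) k =
      (-1 : ℝ) ^ (k * (k - 1) / 2) *
        Matrix.det (Matrix.of fun i j : Fin k =>
          if (j : ℕ) = (i : ℕ) + 1 then (1 : ℝ)
          else if (j : ℕ) ≤ (i : ℕ) then fibonomial (n + ((i : ℕ) - (j : ℕ)) + 1) n
          else 0) := by
  obtain ⟨k', rfl⟩ : ∃ k', k = k'+1 := ⟨k-1, by omega⟩
  set M : Matrix (Fin (k'+1)) (Fin (k'+1)) ℝ := Matrix.of fun i j : Fin (k'+1) =>
          if (j : ℕ) = (i : ℕ) + 1 then (1 : ℝ)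
          else if (j : ℕ) ≤ (i : ℕ) then fibonomial (n + ((i : ℕ) - (j : ℕ)) + 1) n
          else 0 with hM
  set v : Fin (k'+1) → ℝ := fun j => sgn (j:ℕ) * fibonomial (n+1) (j:ℕ) with hv
  set c : ℝ := -(sgn (k'+1) * fibonomial (n+1) (k'+1)) with hc
  -- the row identity
  have hrow : ∀ ii : ℕ, ∑ j ∈ Finset.range (ii+1),
      sgn j * fibonomial (n+1) j * fibonomial (n + (ii - j) + 1) n
      = -(sgn (ii+1) * fibonomial (n+1) (ii+1)) := by
    intro ii
    have h := sum_id (ii+1) (by omega) n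
    rw [Finset.sum_range_succ, show ii+1-(ii+1) = 0 from by omega] at h
    simp only [Nat.add_zero, fibonomial_self] at h
    have h2 : ∑ j ∈ Finset.range (ii+1), sgn j * fibonomial (n+1) j * fibonomial (n + (ii+1 - j)) n
        = ∑ j ∈ Finset.range (ii+1), sgn j * fibonomial (n+1) j
            * fibonomial (n + (ii - j) + 1) n := by
      refine Finset.sum_congr rfl fun j hj => ?_
      have := Finset.mem_range.mp hj
      rw [show n + (ii+1-j) = n + (ii - j) + 1 from by omega]
    rw [h2] at h
    linarith
  -- M.mulVec v = c • e_last
  have hA : M.mulVec v = Pi.single (Fin.last k') c := by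
    funext i
    have hfin : (M.mulVec v) i = ∑ jn ∈ Finset.range (k'+1),
        (if jn = (i:ℕ)+1 then (1:ℝ) else if jn ≤ (i:ℕ)
          then fibonomial (n + ((i:ℕ) - jn) + 1) n else 0)
        * (sgn jn * fibonomial (n+1) jn) := by
      rw [← Fin.sum_univ_eq_sum_range (fun jn =>
        (if jn = (i:ℕ)+1 then (1:ℝ) else if jn ≤ (i:ℕ)
          then fibonomial (n + ((i:ℕ) - jn) + 1) n else 0)
        * (sgn jn * fibonomial (n+1) jn)) (k'+1)]
      simp only [Matrix.mulVec, dotProduct, hM, hv, Matrix.of_apply]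
    rw [hfin, Pi.single_apply]
    by_cases hi : i = Fin.last k'
    · rw [if_pos hi, hc]
      subst hi
      rw [show ∑ jn ∈ Finset.range (k'+1),
        (if jn = ((Fin.last k' : Fin (k'+1)):ℕ)+1 then (1:ℝ)
          else if jn ≤ ((Fin.last k' : Fin (k'+1)):ℕ)
          then fibonomial (n + (((Fin.last k' : Fin (k'+1)):ℕ) - jn) + 1) n else 0)
        * (sgn jn * fibonomial (n+1) jn)
        = ∑ jn ∈ Finset.range (k'+1),
          sgn jn * fibonomial (n+1) jn * fibonomial (n + (k' - jn) + 1) n from ?_]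
      · exact hrow k'
      · refine Finset.sum_congr rfl fun jn hjn => ?_
        have hjn' := Finset.mem_range.mp hjn
        rw [Fin.val_last, if_neg (by omega), if_pos (by omega)]
        ring
    · rw [if_neg hi]
      have hik : (i:ℕ) < k' := by
        have h1 := i.isLt
        have h2 : (i:ℕ) ≠ k' := fun hh => hi (Fin.ext (by rw [hh, Fin.val_last]))
        omega
      rw [show ∑ jn ∈ Finset.range (k'+1),
        (if jn = (i:ℕ)+1 then (1:ℝ) else if jn ≤ (i:ℕ)
          then fibonomial (n + ((i:ℕ) - jn) + 1) n else 0)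
        * (sgn jn * fibonomial (n+1) jn)
        = ∑ jn ∈ Finset.range ((i:ℕ)+2),
        (if jn = (i:ℕ)+1 then (1:ℝ) else if jn ≤ (i:ℕ)
          then fibonomial (n + ((i:ℕ) - jn) + 1) n else 0)
        * (sgn jn * fibonomial (n+1) jn) from
        (Finset.sum_subset (Finset.range_subset_range.mpr (by omega)) fun x _ hx => by
          rw [if_neg (by simp at hx; omega), if_neg (by simp at hx; omega), zero_mul]).symm]
      rw [Finset.sum_range_succ, if_pos rfl, one_mul]
      rw [show ∑ jn ∈ Finset.range ((i:ℕ)+1),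
        (if jn = (i:ℕ)+1 then (1:ℝ) else if jn ≤ (i:ℕ)
          then fibonomial (n + ((i:ℕ) - jn) + 1) n else 0)
        * (sgn jn * fibonomial (n+1) jn)
        = ∑ jn ∈ Finset.range ((i:ℕ)+1),
          sgn jn * fibonomial (n+1) jn * fibonomial (n + ((i:ℕ) - jn) + 1) n from
        Finset.sum_congr rfl fun jn hjn => by
          have := Finset.mem_range.mp hjn
          rw [if_neg (by omega), if_pos (by omega)]; ring]
      rw [hrow (i:ℕ)]
      ring
  -- adjugate entry
  have hadj : Matrix.adjugate M 0 (Fin.last k') = (-1:ℝ)^k' := by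
    rw [Matrix.adjugate_apply, Matrix.det_succ_row _ (Fin.last k')]
    rw [Finset.sum_eq_single (0 : Fin (k'+1))]
    · rw [Matrix.updateRow_self]
      have hsub : ((M.updateRow (Fin.last k') (Pi.single 0 1)).submatrix
          (Fin.last k').succAbove (0 : Fin (k'+1)).succAbove).det = 1 := by
        have hentry : ∀ p q : Fin k',
            (M.updateRow (Fin.last k') (Pi.single 0 1)).submatrix
              (Fin.last k').succAbove (0 : Fin (k'+1)).succAbove p q
            = if (q:ℕ) = (p:ℕ) then (1:ℝ) else if (q:ℕ) < (p:ℕ)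
                then fibonomial (n + ((p:ℕ) - (q:ℕ) - 1) + 1) n else 0 := by
          intro p q
          rw [Matrix.submatrix_apply, Fin.succAbove_last, Fin.succAbove_zero,
            Matrix.updateRow_ne (Fin.castSucc_lt_last p).ne]
          simp only [hM, Matrix.of_apply, Fin.coe_castSucc, Fin.val_succ]
          split_ifs with u1 u2 u3 u4 u5 <;> first
          | rfl
          | omega
          | (congr 1; omega)
        rw [Matrix.det_of_lowerTriangular _ (fun p q hpq => by
          have hlt : p < q := hpq
          have hv' := Fin.lt_iff_val_lt_val.mp hlt
          rw [hentry p q, if_neg (by omega), if_neg (by omega)])]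
        exact Finset.prod_eq_one fun p _ => by rw [hentry p p, if_pos rfl]
      rw [hsub, Pi.single_eq_same]
      simp [Fin.val_last]
    · intro b _ hb
      rw [Matrix.updateRow_self, Pi.single_eq_of_ne hb, mul_zero, zero_mul]
    · intro h
      exact absurd (Finset.mem_univ _) h
  -- combine
  have hmulvec : (Matrix.adjugate M).mulVec (M.mulVec v) = M.det • v := by
    rw [Matrix.mulVec_mulVec, Matrix.adjugate_mul, Matrix.smul_mulVec, Matrix.one_mulVec]
  have h0 := congrFun hmulvec 0
  rw [hA, Matrix.mulVec_single] at h0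
  simp only [Pi.smul_apply, smul_eq_mul, op_smul_eq_mul, Matrix.col_apply] at h0
  rw [hadj] at h0
  have hv0 : v 0 = 1 := by
    simp [hv, sgn, fibonomial_zero]
  have hdet : M.det = (-1:ℝ)^k' * c := by
    rw [hv0, mul_one] at h0
    exact h0.symm
  rw [hdet, hc, sgn]
  rw [show k'+1-1 = k' from rfl]
  obtain ⟨a, ha⟩ := Nat.even_mul_succ_self k'
  have h1 : (k'+1)*k' = k'*(k'+1) := by ring
  have h2 : (k'+1)*((k'+1)+1) = k'*(k'+1) + 2*(k'+1) := by ring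
  have hsign : (-1:ℝ)^((k'+1)*k'/2) * ((-1:ℝ)^k' * -((-1:ℝ)^((k'+1)*((k'+1)+1)/2))) 
      = -((-1:ℝ)^((k'+1)*k'/2 + k' + (k'+1)*((k'+1)+1)/2)) := by
    rw [pow_add, pow_add]; ring
  have heven : Even ((k'+1)*k'/2 + k' + (k'+1)*((k'+1)+1)/2 + 1) := by
    rw [Nat.even_iff]
    omega
  calc fibonomial (n+1) (k'+1)
      = ((-1:ℝ)^((k'+1)*k'/2 + k' + (k'+1)*((k'+1)+1)/2 + 1) * fibonomial (n+1) (k'+1)) := by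
        rw [Even.neg_one_pow heven, one_mul]
    _ = (-1:ℝ)^((k'+1)*k'/2) * ((-1:ℝ)^k' * -((-1:ℝ)^((k'+1)*((k'+1)+1)/2) * fibonomial (n+1) (k'+1))) := by
        rw [pow_add, pow_add, pow_add]; ring
end

section
/- For all integers n ≥ 0 and k ≥ 1, Σ_{l=0}^{k} (−1)^l C(n+l, n)_F · (−1)^{(k−l)(k−l−1)/2} C(n+1, k−l)_F = 0. -/
open Finset

noncomputable def NNq (q : ℝ) (m k : ℕ) : ℝ := ∏ r ∈ range k, (1 - q ^ (m - r))
noncomputable def DDq (q : ℝ) (k : ℕ) : ℝ := ∏ r ∈ range k, (1 - q ^ (r + 1))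
noncomputable def qb (q : ℝ) (m k : ℕ) : ℝ := NNq q m k / DDq q k

section qlemmas
variable (q : ℝ)

lemma DDq_ne_zero (hq : ∀ m : ℕ, 1 ≤ m → q ^ m ≠ 1) (k : ℕ) : DDq q k ≠ 0 := by
  refine Finset.prod_ne_zero_iff.mpr fun r _ => ?_
  have := hq (r+1) (by omega)
  intro h
  exact this (by linarith [sub_eq_zero.mp h])

lemma NNq_succ_succ (m k : ℕ) : NNq q (m+1) (k+1) = (1 - q^(m+1)) * NNq q m k := by
  unfold NNq
  rw [Finset.prod_range_succ']
  simp only [Nat.succ_sub_succ, Nat.sub_zero]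
  ring

lemma NNq_succ (m k : ℕ) : NNq q m (k+1) = NNq q m k * (1 - q^(m-k)) :=
  Finset.prod_range_succ _ _

lemma DDq_succ (k : ℕ) : DDq q (k+1) = DDq q k * (1 - q^(k+1)) :=
  Finset.prod_range_succ _ _

lemma NNq_self (m : ℕ) : NNq q m m = DDq q m := by
  induction m with
  | zero => simp [NNq, DDq]
  | succ m ih => rw [NNq_succ_succ, ih, DDq_succ]; ring

lemma NNq_eq_zero {m k : ℕ} (h : m < k) : NNq q m k = 0 := by
  refine Finset.prod_eq_zero (Finset.mem_range.mpr h) ?_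
  simp [Nat.sub_self]

lemma qb_zero (m : ℕ) : qb q m 0 = 1 := by simp [qb, NNq, DDq]

lemma qb_self (hq : ∀ m : ℕ, 1 ≤ m → q ^ m ≠ 1) (m : ℕ) : qb q m m = 1 := by
  rw [qb, NNq_self, div_self (DDq_ne_zero q hq m)]

lemma qb_big {m k : ℕ} (h : m < k) : qb q m k = 0 := by
  simp [qb, NNq_eq_zero q h]

lemma pascalA (hq : ∀ m : ℕ, 1 ≤ m → q ^ m ≠ 1) (n l : ℕ) :
    qb q (n+1+l) (n+1) = qb q (n+l) n + q^(n+1) * qb q (n+l) (n+1) := by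
  have h1 : NNq q (n+1+l) (n+1) = (1 - q^(n+l+1)) * NNq q (n+l) n := by
    rw [show n+1+l = (n+l)+1 by omega]
    exact NNq_succ_succ q (n+l) n
  have h2 : NNq q (n+l) (n+1) = NNq q (n+l) n * (1 - q^l) := by
    rw [NNq_succ, Nat.add_sub_cancel_left]
  unfold qb
  rw [h1, h2, DDq_succ]
  have hd := DDq_ne_zero q hq n
  have hs : (1 : ℝ) - q^(n+1) ≠ 0 := by
    intro h; exact hq (n+1) (by omega) (by linarith [sub_eq_zero.mp h])
  field_simp
  ring

lemma pascalB (hq : ∀ m : ℕ, 1 ≤ m → q ^ m ≠ 1) (n i : ℕ) :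
    q^((i+1)*i/2) * qb q (n+2) (i+1)
      = q^((i+1)*i/2) * qb q (n+1) (i+1) + q^(n+1) * (q^(i*(i-1)/2) * qb q (n+1) i) := by
  have h2 : (i+1).choose 2 = (i+1)*i/2 := by rw [Nat.choose_two_right]; simp
  have he : (i+1)*i/2 = i*(i-1)/2 + i := by
    rw [← h2, Nat.choose_succ_succ, Nat.choose_one_right, Nat.choose_two_right, Nat.add_comm]
  rcases le_or_gt i (n+1) with hi | hi
  · obtain ⟨d, hd⟩ : ∃ d, n + 1 = i + d := ⟨n+1-i, by omega⟩
    have h1 : NNq q (n+2) (i+1) = (1 - q^(n+2)) * NNq q (n+1) i := NNq_succ_succ q (n+1) i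
    have h2 : NNq q (n+1) (i+1) = NNq q (n+1) i * (1 - q^d) := by
      rw [NNq_succ, show n+1-i = d by omega]
    unfold qb
    rw [h1, h2, DDq_succ, he, show n+2 = i+d+1 by omega, show n+1 = i+d by omega]
    have hd0 := DDq_ne_zero q hq i
    have hs : (1 : ℝ) - q^(i+d+1) ≠ 0 := by
      intro h; exact hq (i+d+1) (by omega) (by linarith [sub_eq_zero.mp h])
    have hsi : (1 : ℝ) - q^(i+1) ≠ 0 := by
      intro h; exact hq (i+1) (by omega) (by linarith [sub_eq_zero.mp h])
    field_simp
    ring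
  · have z1 : qb q (n+1) i = 0 := qb_big q hi
    have z2 : qb q (n+1) (i+1) = 0 := qb_big q (by omega)
    have z3 : qb q (n+2) (i+1) = 0 := by
      unfold qb
      rw [NNq_succ_succ, NNq_eq_zero q hi, mul_zero, zero_div]
    rw [z1, z2, z3]; ring

end qlemmas
noncomputable def SSq (q : ℝ) (n k : ℕ) : ℝ :=
  ∑ l ∈ range (k + 1),
    (-1 : ℝ) ^ l * qb q (n + l) n * q ^ ((k - l) * (k - l - 1) / 2) * qb q (n + 1) (k - l)

section Slemmas
variable (q : ℝ)

lemma SSq_zero (hq : ∀ m : ℕ, 1 ≤ m → q ^ m ≠ 1) (n : ℕ) : SSq q n 0 = 1 := by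
  simp [SSq, qb_self q hq, qb_zero]

lemma SSq_base (hq : ∀ m : ℕ, 1 ≤ m → q ^ m ≠ 1) (k : ℕ) : SSq q 0 (k + 1) = 0 := by
  unfold SSq
  rw [Finset.sum_range_succ, Finset.sum_range_succ]
  have h0 : ∀ l ∈ range k, (-1 : ℝ) ^ l * qb q (0 + l) 0 * q ^ ((k+1-l)*(k+1-l-1)/2) * qb q (0+1) (k+1-l) = 0 := by
    intro l hl
    have : qb q (0+1) (k+1-l) = 0 := qb_big q (by simp at hl; omega)
    rw [this, mul_zero]
  rw [Finset.sum_eq_zero h0, zero_add]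
  rw [show k + 1 - k = 1 by omega, Nat.sub_self]
  simp [qb_zero, qb_self q hq, pow_succ]

lemma SSq_rec (hq : ∀ m : ℕ, 1 ≤ m → q ^ m ≠ 1) (n k : ℕ) :
    SSq q (n+1) (k+1) = SSq q n (k+1) + q^(n+1) * SSq q n k - q^(n+1) * SSq q (n+1) k := by
  have step1 : SSq q (n+1) (k+1)
      = (∑ l ∈ range (k+1+1), (-1:ℝ)^l * qb q (n+l) n * q^((k+1-l)*(k+1-l-1)/2) * qb q (n+1+1) (k+1-l))
        + (∑ l ∈ range (k+1+1), (-1:ℝ)^l * (q^(n+1) * qb q (n+l) (n+1)) * q^((k+1-l)*(k+1-l-1)/2) * qb q (n+1+1) (k+1-l)) := by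
    rw [SSq, ← Finset.sum_add_distrib]
    refine Finset.sum_congr rfl fun l hl => ?_
    rw [pascalA q hq n l]
    ring
  have step2 : (∑ l ∈ range (k+1+1), (-1:ℝ)^l * (q^(n+1) * qb q (n+l) (n+1)) * q^((k+1-l)*(k+1-l-1)/2) * qb q (n+1+1) (k+1-l))
      = -(q^(n+1) * SSq q (n+1) k) := by
    rw [Finset.sum_range_succ']
    have f0 : (-1:ℝ)^0 * (q^(n+1) * qb q (n+0) (n+1)) * q^((k+1-0)*(k+1-0-1)/2) * qb q (n+1+1) (k+1-0) = 0 := by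
      rw [qb_big q (show n+0 < n+1 by omega)]
      ring
    rw [f0, add_zero, SSq, Finset.mul_sum, ← Finset.sum_neg_distrib]
    refine Finset.sum_congr rfl fun i hi => ?_
    rw [show n + (i+1) = n+1+i by omega, show k+1-(i+1) = k-i by omega, pow_succ]
    ring
  have step3 : (∑ l ∈ range (k+1+1), (-1:ℝ)^l * qb q (n+l) n * q^((k+1-l)*(k+1-l-1)/2) * qb q (n+1+1) (k+1-l))
      = SSq q n (k+1) + q^(n+1) * SSq q n k := by
    rw [Finset.sum_range_succ]
    have hsplit : ∀ l ∈ range (k+1),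
        (-1:ℝ)^l * qb q (n+l) n * q^((k+1-l)*(k+1-l-1)/2) * qb q (n+1+1) (k+1-l)
        = (-1:ℝ)^l * qb q (n+l) n * q^((k+1-l)*(k+1-l-1)/2) * qb q (n+1) (k+1-l)
          + q^(n+1) * ((-1:ℝ)^l * qb q (n+l) n * q^((k-l)*(k-l-1)/2) * qb q (n+1) (k-l)) := by
      intro l hl
      have hi : k+1-l = (k-l)+1 := by simp at hl; omega
      rw [hi, Nat.add_sub_cancel]
      have hp := pascalB q hq n (k-l)
      rw [show n+1+1 = n+2 from rfl]
      linear_combination ((-1:ℝ)^l * qb q (n+l) n) * hp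
    rw [Finset.sum_congr rfl hsplit, Finset.sum_add_distrib, ← Finset.mul_sum]
    have hSS1 : SSq q n (k+1) = (∑ l ∈ range (k+1),
        (-1:ℝ)^l * qb q (n+l) n * q^((k+1-l)*(k+1-l-1)/2) * qb q (n+1) (k+1-l))
        + (-1:ℝ)^(k+1) * qb q (n+(k+1)) n * q^((k+1-(k+1))*(k+1-(k+1)-1)/2) * qb q (n+1) (k+1-(k+1)) := by
      rw [SSq, Finset.sum_range_succ]
    rw [hSS1, SSq]
    rw [Nat.sub_self]
    simp only [Nat.zero_mul, Nat.zero_div, pow_zero, qb_zero]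
    ring
  rw [step1, step2, step3]
  rw [SSq]
  ring

lemma SSq_eq_zero (hq : ∀ m : ℕ, 1 ≤ m → q ^ m ≠ 1) (n k : ℕ) (hk : 1 ≤ k) :
    SSq q n k = 0 := by
  induction n generalizing k with
  | zero =>
    cases k with
    | zero => omega
    | succ k => exact SSq_base q hq k
  | succ n ih =>
    suffices H : ∀ m : ℕ, SSq q (n+1) (m+1) = 0 by
      cases k with
      | zero => omega
      | succ k => exact H k
    intro m
    induction m with
    | zero =>
      rw [SSq_rec q hq, ih 1 le_rfl, SSq_zero q hq, SSq_zero q hq]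
      ring
    | succ m ihm =>
      rw [SSq_rec q hq, ih (m+1+1) (by omega), ih (m+1) (by omega), ihm]
      ring

end Slemmas

open goldenRatio Real in
noncomputable def qg : ℝ := ψ / φ

open goldenRatio Real

lemma qg_abs_lt : |qg| < 1 := by
  rw [qg, abs_div, abs_of_pos goldenRatio_pos, div_lt_one goldenRatio_pos, abs_lt]
  constructor
  · have := goldenRatio_add_goldenConj; linarith
  · have := goldenConj_neg; have := goldenRatio_pos; linarith

lemma qg_pow_ne_one : ∀ m : ℕ, 1 ≤ m → qg ^ m ≠ 1 := by
  intro m hm h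
  have h1 : |qg ^ m| < 1 := by
    rw [abs_pow]
    exact pow_lt_one₀ (abs_nonneg _) qg_abs_lt (by omega)
  rw [h] at h1
  norm_num at h1

lemma goldConj_eq : ψ = φ * qg := by
  rw [qg, mul_div_cancel₀ _ goldenRatio_ne_zero]

lemma qg_def : qg = -1 / φ ^ 2 := by
  rw [qg, ← mul_div_mul_left ψ φ goldenRatio_ne_zero, goldenRatio_mul_goldenConj, ← sq]

lemma fib_eq (m : ℕ) : (Nat.fib m : ℝ) = φ ^ m * (1 - qg ^ m) / √5 := by
  rw [Real.coe_fib_eq, goldConj_eq, mul_pow]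
  ring

lemma sqrt5_ne_zero : (√5 : ℝ) ≠ 0 := by positivity

lemma fib_prod (N k : ℕ) :
    fibonomial N k = (∏ r ∈ range k, φ ^ (N - r) / φ ^ (r + 1)) * qb qg N k := by
  have hfac : ∀ r : ℕ, (Nat.fib (N - r) : ℝ) / (Nat.fib (r + 1) : ℝ)
      = (φ ^ (N - r) / φ ^ (r + 1)) * ((1 - qg ^ (N - r)) / (1 - qg ^ (r + 1))) := by
    intro r
    rw [fib_eq, fib_eq, div_div_div_comm, div_self sqrt5_ne_zero, div_one,
      ← div_mul_div_comm]
  rw [fibonomial, Finset.prod_congr rfl fun r _ => hfac r, Finset.prod_mul_distrib]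
  congr 1
  rw [qb, NNq, DDq, Finset.prod_div_distrib]

lemma fibonomial_big {m k : ℕ} (h : m < k) : fibonomial m k = 0 := by
  refine Finset.prod_eq_zero (Finset.mem_range.mpr h) ?_
  simp [Nat.sub_self]

lemma L1 (n l : ℕ) : fibonomial (n + l) n = φ ^ (n * l) * qb qg (n + l) n := by
  rw [fib_prod]
  congr 1
  rw [Finset.prod_div_distrib, Finset.prod_pow_eq_pow_sum, Finset.prod_pow_eq_pow_sum]
  have hrw : ∀ r ∈ range n, n + l - r = l + ((n - 1 - r) + 1) := by
    intro r hr; rw [Finset.mem_range] at hr; omega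
  have hS : ∑ r ∈ range n, (n + l - r) = n * l + ∑ r ∈ range n, (r + 1) := by
    rw [Finset.sum_congr rfl hrw, Finset.sum_add_distrib, Finset.sum_const, Finset.card_range,
      Finset.sum_range_reflect (fun r => r + 1) n, smul_eq_mul]
  rw [hS, pow_add, mul_div_assoc, div_self (pow_ne_zero _ goldenRatio_ne_zero), mul_one]

lemma L2 (n j : ℕ) (hj : j ≤ n + 1) :
    (-1 : ℝ) ^ (j * (j - 1) / 2) * fibonomial (n + 1) j
      = φ ^ (n * j) * (qg ^ (j * (j - 1) / 2) * qb qg (n + 1) j) := by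
  rw [fib_prod]
  have hΦ : (∏ r ∈ range j, φ ^ (n + 1 - r) / φ ^ (r + 1)) = φ ^ (j * (n + 1 - j)) := by
    rw [Finset.prod_div_distrib, Finset.prod_pow_eq_pow_sum, Finset.prod_pow_eq_pow_sum]
    have hrw : ∀ r ∈ range j, n + 1 - r = (n + 1 - j) + ((j - 1 - r) + 1) := by
      intro r hr; rw [Finset.mem_range] at hr; omega
    have hS : ∑ r ∈ range j, (n + 1 - r) = j * (n + 1 - j) + ∑ r ∈ range j, (r + 1) := by
      rw [Finset.sum_congr rfl hrw, Finset.sum_add_distrib, Finset.sum_const, Finset.card_range,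
        Finset.sum_range_reflect (fun r => r + 1) j, smul_eq_mul]
    rw [hS, pow_add, mul_div_assoc, div_self (pow_ne_zero _ goldenRatio_ne_zero), mul_one]
  have h2C : 2 * (j * (j - 1) / 2) = j * (j - 1) := by
    rcases j with _ | m
    · simp
    · have he : Even ((m + 1) * ((m + 1) - 1)) := by
        simp only [Nat.add_sub_cancel]
        rw [mul_comm]
        exact Nat.even_mul_succ_self m
      obtain ⟨c, hc⟩ := he
      omega
  have hne : φ ^ (j * (j - 1)) ≠ 0 := pow_ne_zero _ goldenRatio_ne_zero
  have hq2 : (-1 : ℝ) ^ (j * (j - 1) / 2) = qg ^ (j * (j - 1) / 2) * φ ^ (j * (j - 1)) := by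
    rw [qg_def, div_pow, ← pow_mul, h2C, div_mul_cancel₀ _ hne]
  have hexp : j * (n + 1 - j) + j * (j - 1) = n * j := by
    rcases Nat.eq_zero_or_pos j with h0 | h1
    · simp [h0]
    · zify [hj, h1]; ring
  have hp : φ ^ (j * (n + 1 - j)) * φ ^ (j * (j - 1)) = φ ^ (n * j) := by
    rw [← pow_add, hexp]
  rw [hΦ]
  linear_combination (φ ^ (j * (n + 1 - j)) * qb qg (n + 1) j) * hq2 +
    (qg ^ (j * (j - 1) / 2) * qb qg (n + 1) j) * hp

theorem alternating_fibonomial_convolution (n k : ℕ) (hk : 1 ≤ k) :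
    ∑ l ∈ Finset.range (k + 1),
      (-1 : ℝ) ^ l * fibonomial (n + l) n *
        (-1 : ℝ) ^ ((k - l) * (k - l - 1) / 2) * fibonomial (n + 1) (k - l) = 0 := by
  have key : ∀ l ∈ Finset.range (k + 1),
      (-1 : ℝ) ^ l * fibonomial (n + l) n *
          (-1 : ℝ) ^ ((k - l) * (k - l - 1) / 2) * fibonomial (n + 1) (k - l)
        = φ ^ (n * k) *
            ((-1 : ℝ) ^ l * qb qg (n + l) n * qg ^ ((k - l) * (k - l - 1) / 2) *
              qb qg (n + 1) (k - l)) := by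
    intro l hl
    rw [Finset.mem_range] at hl
    have hlk : l ≤ k := by omega
    rcases le_or_gt (k - l) (n + 1) with hj | hj
    · have hA := L1 n l
      have hB := L2 n (k - l) hj
      have hpow : φ ^ (n * l) * φ ^ (n * (k - l)) = φ ^ (n * k) := by
        rw [← pow_add]
        congr 1
        zify [hlk]
        ring
      rw [hA]
      linear_combination ((-1 : ℝ) ^ l * (φ ^ (n * l) * qb qg (n + l) n)) * hB +
        ((-1 : ℝ) ^ l * qb qg (n + l) n * qg ^ ((k - l) * (k - l - 1) / 2) *
          qb qg (n + 1) (k - l)) * hpow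
    · rw [fibonomial_big hj, qb_big qg hj]
      ring
  rw [Finset.sum_congr rfl key, ← Finset.mul_sum]
  have : SSq qg n k = 0 := SSq_eq_zero qg qg_pow_ne_one n k hk
  rw [show (∑ l ∈ Finset.range (k + 1),
      (-1 : ℝ) ^ l * qb qg (n + l) n * qg ^ ((k - l) * (k - l - 1) / 2) *
        qb qg (n + 1) (k - l)) = SSq qg n k from rfl, this, mul_zero]
end

section
/- For all integers 0 ≤ K ≤ N, the following identity holds in the real numbers: C(N, K)_F = α^{K(N−K)} · ∏_{r=1}^{K} (1 − q^{N−r+1})/(1 − q^r), where q = β/α; i.e., the Fibonomial coefficient equals α^{K(N−K)} times the Gaussian binomial coefficient [N choose K]_q evaluated at q = β/α. -/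
theorem fibonomial_eq_pow_mul_gaussian (N K : ℕ) (hKN : K ≤ N) :
    fibonomial N K =
      ((1 + Real.sqrt 5) / 2) ^ (K * (N - K)) *
        ∏ r ∈ Finset.range K,
          (1 - (((1 - Real.sqrt 5) / 2) / ((1 + Real.sqrt 5) / 2)) ^ (N - r)) /
            (1 - (((1 - Real.sqrt 5) / 2) / ((1 + Real.sqrt 5) / 2)) ^ (r + 1)) := by
  have h5 : (0:ℝ) < Real.sqrt 5 := Real.sqrt_pos.2 (by norm_num)
  set α : ℝ := (1 + Real.sqrt 5)/2 with hαdef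
  set β : ℝ := (1 - Real.sqrt 5)/2 with hβdef
  have hα : α ≠ 0 := Real.goldenRatio_ne_zero
  have hfib : ∀ m : ℕ, (Nat.fib m : ℝ) = α ^ m * (1 - (β/α)^m) / Real.sqrt 5 := by
    intro m
    have h1 : α ^ m * (1 - (β/α) ^ m) = α ^ m - β ^ m := by
      have h2 : α * (β / α) = β := by rw [mul_comm]; exact div_mul_cancel₀ β hα
      rw [mul_sub, mul_one, ← mul_pow, h2]
    rw [h1, Real.coe_fib_eq m]
  have hne : ∀ m : ℕ, 0 < m → (1 - (β/α)^m) ≠ 0 := by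
    intro m hm h0
    have hf : (0:ℝ) < Nat.fib m := by exact_mod_cast Nat.fib_pos.2 hm
    rw [hfib m, h0] at hf
    simp at hf
  unfold fibonomial
  rw [Finset.prod_div_distrib]
  have hnum : ∏ r ∈ Finset.range K, (Nat.fib (N - r) : ℝ)
      = α ^ (∑ r ∈ Finset.range K, (N - r)) *
          (∏ r ∈ Finset.range K, (1 - (β/α)^(N - r))) / (Real.sqrt 5) ^ K := by
    rw [Finset.prod_congr rfl (fun r _ => hfib (N - r)), Finset.prod_div_distrib,
      Finset.prod_mul_distrib, Finset.prod_pow_eq_pow_sum, Finset.prod_const, Finset.card_range]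
  have hden : ∏ r ∈ Finset.range K, (Nat.fib (r + 1) : ℝ)
      = α ^ (∑ r ∈ Finset.range K, (r + 1)) *
          (∏ r ∈ Finset.range K, (1 - (β/α)^(r + 1))) / (Real.sqrt 5) ^ K := by
    rw [Finset.prod_congr rfl (fun r _ => hfib (r + 1)), Finset.prod_div_distrib,
      Finset.prod_mul_distrib, Finset.prod_pow_eq_pow_sum, Finset.prod_const, Finset.card_range]
  rw [hnum, hden, Finset.prod_div_distrib]
  set S1 := ∑ r ∈ Finset.range K, (N - r) with hS1
  set S2 := ∑ r ∈ Finset.range K, (r + 1) with hS2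
  have hsum : S1 = S2 + K * (N - K) := by
    have h1 : S1 + (∑ r ∈ Finset.range K, r) = K * N := by
      rw [← Finset.sum_add_distrib]
      rw [Finset.sum_congr rfl (fun r hr => by
        have := Finset.mem_range.1 hr; omega : ∀ r ∈ Finset.range K, (N - r) + r = N)]
      simp [Finset.sum_const, mul_comm]
    have h2 : S2 = (∑ r ∈ Finset.range K, r) + K := by
      rw [hS2, Finset.sum_add_distrib]; simp
    have h3 : (∑ r ∈ Finset.range K, r) * 2 = K * (K - 1) := Finset.sum_range_id_mul_two K
    have h4 : K * N = K * (N - K) + K * K := by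
      rw [← Nat.mul_add, Nat.sub_add_cancel hKN]
    have h5' : K * (K - 1) + K = K * K := by
      cases K with
      | zero => simp
      | succ n => simp [Nat.succ_sub_one]; ring
    omega
  have hP2 : (∏ r ∈ Finset.range K, (1 - (β/α)^(r + 1))) ≠ 0 :=
    Finset.prod_ne_zero_iff.2 (fun r _ => hne (r+1) (Nat.succ_pos r))
  have hs5 : (Real.sqrt 5) ^ K ≠ 0 := pow_ne_zero _ (ne_of_gt h5)
  have hαS2 : α ^ S2 ≠ 0 := pow_ne_zero _ hα
  have key : ∀ (a b p q c : ℝ), a ≠ 0 → c ≠ 0 → q ≠ 0 →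
      (a * b * p / c) / (a * q / c) = b * (p / q) := by
    intros a b p q c ha hc hq
    field_simp
  rw [hsum, pow_add]
  exact key _ _ _ _ _ hαS2 hs5 hP2
end

section
/- For every integer n ≥ 0 and every real number z: Σ_{k=0}^{n} (−1)^{k(k−1)/2} C(n, k)_F z^k = ∏_{j=0}^{n−1} (1 + α^{n−1−j} β^{j} z). -/
open Real goldenRatio Finset

lemma fib_cast_ne_s5 (k : ℕ) : (Nat.fib (k+1) : ℝ) ≠ 0 :=
  Nat.cast_ne_zero.mpr (Nat.fib_pos.mpr k.succ_pos).ne'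

lemma binet_add (m k : ℕ) :
    (Nat.fib (m + k) : ℝ) = φ ^ k * Nat.fib m + ψ ^ m * Nat.fib k := by
  have h5 : √5 ≠ 0 := by positivity
  rw [Real.coe_fib_eq, Real.coe_fib_eq, Real.coe_fib_eq]
  field_simp
  ring

lemma lemA (n k : ℕ) :
    (Nat.fib (n+1) : ℝ) * fibonomial n k = (Nat.fib (n + 1 - k) : ℝ) * fibonomial (n+1) k := by
  induction k with
  | zero => simp [fibonomial]
  | succ k ih =>
    have h1 : fibonomial n (k+1) = fibonomial n k * ((Nat.fib (n - k) : ℝ) / Nat.fib (k+1)) :=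
      Finset.prod_range_succ _ _
    have h2 : fibonomial (n+1) (k+1)
        = fibonomial (n+1) k * ((Nat.fib (n + 1 - k) : ℝ) / Nat.fib (k+1)) :=
      Finset.prod_range_succ _ _
    have h3 : n + 1 - (k + 1) = n - k := by omega
    rw [h1, h2, h3]
    have hf := fib_cast_ne_s5 k
    field_simp
    nlinarith [ih]

lemma lemB (n k : ℕ) :
    (Nat.fib (k+1) : ℝ) * fibonomial (n+1) (k+1) = (Nat.fib (n+1) : ℝ) * fibonomial n k := by
  induction k with
  | zero => simp [fibonomial, Finset.prod_range_one]
  | succ k ih =>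
    have h1 : fibonomial n (k+1) = fibonomial n k * ((Nat.fib (n - k) : ℝ) / Nat.fib (k+1)) :=
      Finset.prod_range_succ _ _
    have h2 : fibonomial (n+1) (k+1+1)
        = fibonomial (n+1) (k+1) * ((Nat.fib (n + 1 - (k+1)) : ℝ) / Nat.fib (k+1+1)) :=
      Finset.prod_range_succ _ _
    have h3 : n + 1 - (k + 1) = n - k := by omega
    rw [h1, h2, h3]
    have hf := fib_cast_ne_s5 k
    have hf2 := fib_cast_ne_s5 (k+1)
    field_simp
    nlinarith [ih]

lemma fibonomial_top (n : ℕ) : fibonomial n (n+1) = 0 := by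
  apply Finset.prod_eq_zero (Finset.self_mem_range_succ n)
  simp

lemma recC (n k : ℕ) (hk : k ≤ n) :
    fibonomial (n+1) (k+1)
      = φ ^ (k+1) * fibonomial n (k+1) + ψ ^ (n - k) * fibonomial n k := by
  have hF : (Nat.fib (n+1) : ℝ) ≠ 0 := fib_cast_ne_s5 n
  have hadd : (Nat.fib (n+1) : ℝ)
      = φ ^ (k+1) * Nat.fib (n - k) + ψ ^ (n - k) * Nat.fib (k+1) := by
    have := binet_add (n - k) (k+1)
    rwa [show n - k + (k+1) = n + 1 by omega] at this
  have hA := lemA n (k+1)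
  rw [show n + 1 - (k+1) = n - k by omega] at hA
  have hB := lemB n k
  apply mul_left_cancel₀ hF
  calc (Nat.fib (n+1) : ℝ) * fibonomial (n+1) (k+1)
      = (φ ^ (k+1) * Nat.fib (n - k) + ψ ^ (n - k) * Nat.fib (k+1)) * fibonomial (n+1) (k+1) := by
        rw [← hadd]
    _ = φ ^ (k+1) * ((Nat.fib (n - k) : ℝ) * fibonomial (n+1) (k+1))
        + ψ ^ (n - k) * ((Nat.fib (k+1) : ℝ) * fibonomial (n+1) (k+1)) := by ring
    _ = φ ^ (k+1) * ((Nat.fib (n+1) : ℝ) * fibonomial n (k+1))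
        + ψ ^ (n - k) * ((Nat.fib (n+1) : ℝ) * fibonomial n k) := by rw [← hA, hB]
    _ = _ := by ring

theorem fibonomial_gen (n : ℕ) : ∀ z : ℝ,
    ∑ k ∈ Finset.range (n + 1),
        (-1 : ℝ) ^ (k * (k - 1) / 2) * fibonomial n k * z ^ k =
      ∏ j ∈ Finset.range n, (1 + φ ^ (n - 1 - j) * ψ ^ j * z) := by
  induction n with
  | zero => intro z; simp [fibonomial]
  | succ n ih =>
    intro z
    set g : ℕ → ℝ := fun k => (-1 : ℝ) ^ (k * (k - 1) / 2) * fibonomial n k * (φ * z) ^ k with hg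
    have step : ∀ k ∈ Finset.range (n+1),
        (-1 : ℝ) ^ ((k+1) * ((k+1) - 1) / 2) * fibonomial (n+1) (k+1) * z ^ (k+1)
          = g (k+1) + ψ ^ n * z * g k := by
      intro k hk
      have hk' : k ≤ n := Nat.lt_succ_iff.mp (Finset.mem_range.mp hk)
      rw [recC n k hk']
      have htri : (k+1) * ((k+1) - 1) / 2 = k * (k-1) / 2 + k := by
        have h3 : (k+1).choose 2 = k.choose 1 + k.choose 2 := Nat.choose_succ_succ k 1
        rw [Nat.choose_two_right, Nat.choose_two_right, Nat.choose_one_right] at h3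
        rw [h3, Nat.add_comm]
      have hsign : ((-1 : ℝ)) ^ ((k+1) * k / 2)
          = (-1 : ℝ) ^ (k * (k-1) / 2) * (-1) ^ k := by
        rw [show (k+1) * k = (k+1) * ((k+1) - 1) from rfl, htri, pow_add]
      have hpsi : ψ ^ (n - k) * (-1 : ℝ) ^ k = ψ ^ n * φ ^ k := by
        have h1 : ψ ^ n = ψ ^ (n - k) * ψ ^ k := by rw [← pow_add]; congr 1; omega
        have h2 : ((-1 : ℝ)) ^ k = (ψ * φ) ^ k := by rw [goldenConj_mul_goldenRatio]
        rw [h1, h2, mul_pow]; ring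
      simp only [hg, Nat.add_sub_cancel, hsign, mul_pow]
      linear_combination ((-1 : ℝ) ^ (k * (k-1) / 2) * fibonomial n k * z ^ (k+1)) * hpsi
    have hS : ∑ k ∈ Finset.range (n + 2),
        (-1 : ℝ) ^ (k * (k - 1) / 2) * fibonomial (n+1) k * z ^ k
        = (1 + ψ ^ n * z) * ∑ k ∈ Finset.range (n + 1), g k := by
      rw [Finset.sum_range_succ'
        (fun k => (-1 : ℝ) ^ (k * (k - 1) / 2) * fibonomial (n+1) k * z ^ k) (n+1)]
      rw [Finset.sum_congr rfl step, Finset.sum_add_distrib, ← Finset.mul_sum]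
      have h1 : ∑ k ∈ Finset.range (n+1), g (k+1)
          = ∑ k ∈ Finset.range (n+2), g k - g 0 := by
        rw [Finset.sum_range_succ' g (n+1)]; ring
      have h2 : ∑ k ∈ Finset.range (n+2), g k = ∑ k ∈ Finset.range (n+1), g k := by
        rw [Finset.sum_range_succ]
        simp [hg, fibonomial_top n]
      have h0 : g 0 = 1 := by simp [hg, fibonomial]
      rw [h1, h2, h0]
      simp [fibonomial]
      ring
    rw [hS, ih (φ * z)]
    rw [Finset.prod_range_succ]
    have hfac : ∀ j ∈ Finset.range n,
        (1 + φ ^ (n - 1 - j) * ψ ^ j * (φ * z)) = (1 + φ ^ (n + 1 - 1 - j) * ψ ^ j * z) := by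
      intro j hj
      have hj' : j < n := Finset.mem_range.mp hj
      have : φ ^ (n + 1 - 1 - j) = φ ^ (n - 1 - j) * φ := by
        rw [← pow_succ]; congr 1; omega
      rw [this]; ring
    rw [Finset.prod_congr rfl hfac]
    have : (1 + φ ^ (n + 1 - 1 - n) * ψ ^ n * z) = 1 + ψ ^ n * z := by
      rw [show n + 1 - 1 - n = 0 by omega]; ring
    rw [this]; ring

theorem fibonomial_generating_function (n : ℕ) (z : ℝ) :
    ∑ k ∈ Finset.range (n + 1),
        (-1 : ℝ) ^ (k * (k - 1) / 2) * fibonomial n k * z ^ k =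
      ∏ j ∈ Finset.range n,
        (1 + ((1 + Real.sqrt 5) / 2) ^ (n - 1 - j) * ((1 - Real.sqrt 5) / 2) ^ j * z) := by
  exact fibonomial_gen n z
end

section
/- For all integers n ≥ 0 and k ≥ 1 and every nonzero real number a, C(n+k, k)_F equals the determinant of the k×k matrix B (rows and columns indexed 1,…,k) defined by B(i,j) = (−1)^{(i−j+1)(i−j)/2} a^{−(i−j)} C(n+1, i−j+1)_F for i ≥ j, B(i, i+1) = a, and B(i,j) = 0 for j > i+1. -/
namespace FibDetAux

open Finset
open Real

noncomputable def q : ℝ := goldenConj / goldenRatio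

lemma abs_q_lt_one : |q| < 1 := by
  rw [abs_lt, q]
  constructor
  · rw [lt_div_iff₀ goldenRatio_pos]
    nlinarith [goldenRatio_add_goldenConj, goldenRatio_pos]
  · rw [div_lt_iff₀ goldenRatio_pos]
    nlinarith [goldenConj_neg, one_lt_goldenRatio]

lemma one_sub_q_pow_ne_zero (k : ℕ) (hk : 1 ≤ k) : 1 - q ^ k ≠ 0 := by
  have h : |q ^ k| < 1 := by
    rw [abs_pow]
    exact pow_lt_one₀ (abs_nonneg _) abs_q_lt_one (by omega)
  intro h0
  have : q ^ k = 1 := by linarith [sub_eq_zero.mp h0]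
  rw [this] at h; simp at h

lemma q_mul_gold_sq : q * goldenRatio ^ 2 = -1 := by
  rw [q, sq, div_mul_eq_mul_div, ← mul_assoc, mul_div_assoc,
    div_self goldenRatio_ne_zero, mul_one, goldenConj_mul_goldenRatio]

lemma q_eq_neg_inv : q = -((goldenRatio ^ 2)⁻¹) := by
  have h2 : goldenRatio ^ 2 ≠ 0 := pow_ne_zero _ goldenRatio_ne_zero
  have h : q = -1 / goldenRatio ^ 2 := by
    rw [eq_div_iff h2]; exact q_mul_gold_sq
  rw [h, neg_div, one_div]

lemma fib_eq (m : ℕ) : (Nat.fib m : ℝ) * (goldenRatio * (1 - q)) =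
    goldenRatio ^ m * (1 - q ^ m) := by
  have h5 : goldenRatio * (1 - q) = Real.sqrt 5 := by
    rw [q]
    field_simp
    linarith [goldenRatio_sub_goldenConj]
  have hψ : goldenConj = q * goldenRatio := by
    rw [q]; field_simp
  have h5ne : Real.sqrt 5 ≠ 0 := by positivity
  rw [h5, Real.coe_fib_eq, hψ, mul_pow, div_mul_cancel₀ _ h5ne]
  ring

noncomputable def qb (N k : ℕ) : ℝ := ∏ r ∈ range k, (1 - q ^ (N - r)) / (1 - q ^ (r + 1))

lemma qb_zero (N : ℕ) : qb N 0 = 1 := by simp [qb]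

lemma qb_eq (N k : ℕ) : qb N k =
    (∏ r ∈ range k, (1 - q ^ (N - r))) / ∏ r ∈ range k, (1 - q ^ (r + 1)) :=
  Finset.prod_div_distrib _ _

lemma den_ne_zero (k : ℕ) : (∏ r ∈ range k, (1 - q ^ (r + 1))) ≠ 0 :=
  Finset.prod_ne_zero_iff.mpr fun r _ => one_sub_q_pow_ne_zero _ (by omega)

lemma qb_eq_zero {N k : ℕ} (h : N < k) : qb N k = 0 := by
  refine Finset.prod_eq_zero (Finset.mem_range.mpr h) ?_
  simp [Nat.sub_self]

lemma qb_self (N : ℕ) : qb N N = 1 := by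
  rw [qb_eq]
  have h : ∏ r ∈ range N, (1 - q ^ (N - r)) = ∏ r ∈ range N, (1 - q ^ (r + 1)) := by
    rw [← Finset.prod_range_reflect (fun r => 1 - q ^ (r + 1)) N]
    apply Finset.prod_congr rfl
    intro r hr
    have : N - 1 - r + 1 = N - r := by
      have := Finset.mem_range.mp hr; omega
    rw [this]
  rw [h, div_self (den_ne_zero N)]

lemma qb_shift (N k : ℕ) : qb (N + 1) (k + 1) * (1 - q ^ (k + 1)) =
    (1 - q ^ (N + 1)) * qb N k := by
  rw [qb_eq, qb_eq]
  have hnum : ∏ r ∈ range (k + 1), (1 - q ^ (N + 1 - r)) =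
      (1 - q ^ (N + 1)) * ∏ r ∈ range k, (1 - q ^ (N - r)) := by
    rw [Finset.prod_range_succ', Nat.sub_zero, mul_comm]
    congr 1
    apply Finset.prod_congr rfl
    intro r _
    congr 2
    omega
  have hden : ∏ r ∈ range (k + 1), (1 - q ^ (r + 1)) =
      (∏ r ∈ range k, (1 - q ^ (r + 1))) * (1 - q ^ (k + 1)) := Finset.prod_range_succ _ _
  rw [hnum, hden]
  field_simp [den_ne_zero, one_sub_q_pow_ne_zero (k + 1) (by omega)]

lemma qb_succ (N k : ℕ) : qb N (k + 1) = qb N k * ((1 - q ^ (N - k)) / (1 - q ^ (k + 1))) :=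
  Finset.prod_range_succ _ _

lemma pascalB (N k : ℕ) : qb (N + 1) (k + 1) = qb N (k + 1) + q ^ (N - k) * qb N k := by
  rcases le_or_gt k N with h | h
  · have hne : (1 : ℝ) - q ^ (k + 1) ≠ 0 := one_sub_q_pow_ne_zero _ (by omega)
    apply mul_right_cancel₀ hne
    rw [qb_shift, qb_succ]
    have hq : q ^ (N - k) * q ^ k = q ^ N := by
      rw [← pow_add]; congr 1; omega
    field_simp
    linear_combination q * qb N k * hq
  · rw [qb_eq_zero (show N + 1 < k + 1 by omega), qb_eq_zero (show N < k + 1 by omega),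
      qb_eq_zero h]
    ring

lemma tri0 (j : ℕ) : (j + 1) * j / 2 = j * (j - 1) / 2 + j := by
  rcases j with _ | i
  · rfl
  · have h2 : (i + 1 + 1) * (i + 1) = (i + 1) * i + (i + 1) * 2 := by ring
    have h3 : i + 1 - 1 = i := rfl
    rw [h3, h2, Nat.add_mul_div_right _ _ (by norm_num : 0 < 2)]

lemma s_succ (i : ℕ) : (-1:ℝ) ^ (i + 1) * q ^ ((i + 1) * (i + 1 - 1) / 2) =
    -((-1:ℝ) ^ i * q ^ (i * (i - 1) / 2) * q ^ i) := by
  have h3 : i + 1 - 1 = i := rfl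
  rw [h3, tri0, pow_add, pow_succ]
  ring

noncomputable def S (n m : ℕ) : ℝ :=
  ∑ j ∈ range (m + 1),
    (-1:ℝ) ^ j * q ^ (j * (j - 1) / 2) * qb (n + 1) j * qb (n + m - j) (m - j)

lemma S_def (n m : ℕ) : S n m = ∑ j ∈ range (m + 1),
    (-1:ℝ) ^ j * q ^ (j * (j - 1) / 2) * qb (n + 1) j * qb (n + m - j) (m - j) := rfl

lemma qident (n : ℕ) : ∀ m : ℕ, S n (m + 1) = 0 := by
  induction n with
  | zero =>
    intro m
    rw [S_def, Finset.sum_range_succ', Finset.sum_range_succ']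
    have h1 : ∀ i ∈ range m, (-1:ℝ) ^ (i + 1 + 1) * q ^ ((i + 1 + 1) * (i + 1 + 1 - 1) / 2)
        * qb (0 + 1) (i + 1 + 1) * qb (0 + (m + 1) - (i + 1 + 1)) (m + 1 - (i + 1 + 1)) = 0 := by
      intro i _
      rw [qb_eq_zero (show 0 + 1 < i + 1 + 1 by omega)]
      ring
    rw [Finset.sum_eq_zero h1]
    rw [show 0 + (m + 1) - (0 + 1) = m by omega, show m + 1 - (0 + 1) = m by omega,
      show 0 + (m + 1) - 0 = m + 1 by omega, show m + 1 - 0 = m + 1 by omega]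
    simp [qb_self, qb_zero]
  | succ n IH =>
    intro m
    induction m with
    | zero =>
      rw [S_def, Finset.sum_range_succ, Finset.sum_range_succ, Finset.sum_range_zero]
      norm_num [qb_zero]
    | succ m IHm =>
      rw [show m + 1 + 1 = m + 2 from by omega]
      have hIH2 : S n (m + 2) = 0 := by
        have := IH (m + 1); rwa [show m + 1 + 1 = m + 2 from by omega] at this
      have h1 : S (n + 1) (m + 2) = (∑ j ∈ range (m + 2), (-1:ℝ) ^ j * q ^ (j * (j - 1) / 2) * qb (n + 1 + 1) j * qb (n + 1 + (m + 2) - j) (m + 2 - j)) + ((-1:ℝ) ^ (m + 2) * q ^ ((m + 2) * ((m + 2) - 1) / 2) * qb (n + 1 + 1) (m + 2) * qb (n + 1 + (m + 2) - (m + 2)) (m + 2 - (m + 2))) := by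
        rw [S_def, Finset.sum_range_succ]
      have h2 : ∀ j ∈ range (m + 2), (-1:ℝ) ^ j * q ^ (j * (j - 1) / 2) * qb (n + 1 + 1) j * qb (n + 1 + (m + 2) - j) (m + 2 - j) = ((-1:ℝ) ^ j * q ^ (j * (j - 1) / 2) * qb (n + 1 + 1) j * qb (n + (m + 2) - j) (m + 2 - j)) + q ^ (n + 1) * ((-1:ℝ) ^ j * q ^ (j * (j - 1) / 2) * qb (n + 1 + 1) j * qb (n + 1 + (m + 1) - j) (m + 1 - j)) := by
        intro j hj
        have hj' : j ≤ m + 1 := by have := Finset.mem_range.mp hj; omega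
        have hp := pascalB (n + m + 2 - j) (m + 1 - j)
        rw [show n + 1 + (m + 2) - j = n + m + 2 - j + 1 from by omega,
          show m + 2 - j = m + 1 - j + 1 from by omega, hp,
          show n + m + 2 - j - (m + 1 - j) = n + 1 from by omega,
          show n + (m + 2) - j = n + m + 2 - j from by omega,
          show n + 1 + (m + 1) - j = n + m + 2 - j from by omega]
        ring
      have h3 : ((-1:ℝ) ^ (m + 2) * q ^ ((m + 2) * ((m + 2) - 1) / 2) * qb (n + 1 + 1) (m + 2) * qb (n + 1 + (m + 2) - (m + 2)) (m + 2 - (m + 2))) = ((-1:ℝ) ^ (m + 2) * q ^ ((m + 2) * ((m + 2) - 1) / 2) * qb (n + 1 + 1) (m + 2) * qb (n + (m + 2) - (m + 2)) (m + 2 - (m + 2))) := by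
        rw [show n + 1 + (m + 2) - (m + 2) = n + 1 from by omega,
          show m + 2 - (m + 2) = 0 from by omega,
          show n + (m + 2) - (m + 2) = n from by omega, qb_zero, qb_zero]
      have h4 : S (n + 1) (m + 1) = ∑ j ∈ range (m + 2), (-1:ℝ) ^ j * q ^ (j * (j - 1) / 2) * qb (n + 1 + 1) j * qb (n + 1 + (m + 1) - j) (m + 1 - j) := by
        rw [S_def, show m + 1 + 1 = m + 2 from by omega]
      have hs2 : (∑ j ∈ range (m + 2), (-1:ℝ) ^ j * q ^ (j * (j - 1) / 2) * qb (n + 1 + 1) j * qb (n + 1 + (m + 2) - j) (m + 2 - j)) =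
          (∑ j ∈ range (m + 2), (-1:ℝ) ^ j * q ^ (j * (j - 1) / 2) * qb (n + 1 + 1) j * qb (n + (m + 2) - j) (m + 2 - j)) + q ^ (n + 1) * (∑ j ∈ range (m + 2), (-1:ℝ) ^ j * q ^ (j * (j - 1) / 2) * qb (n + 1 + 1) j * qb (n + 1 + (m + 1) - j) (m + 1 - j)) := by
        rw [Finset.sum_congr rfl h2, Finset.sum_add_distrib, Finset.mul_sum]
      have h5 : (∑ j ∈ range (m + 2 + 1), (-1:ℝ) ^ j * q ^ (j * (j - 1) / 2) * qb (n + 1 + 1) j * qb (n + (m + 2) - j) (m + 2 - j)) =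
          (∑ j ∈ range (m + 2), (-1:ℝ) ^ j * q ^ (j * (j - 1) / 2) * qb (n + 1 + 1) j * qb (n + (m + 2) - j) (m + 2 - j)) + ((-1:ℝ) ^ (m + 2) * q ^ ((m + 2) * ((m + 2) - 1) / 2) * qb (n + 1 + 1) (m + 2) * qb (n + (m + 2) - (m + 2)) (m + 2 - (m + 2))) := Finset.sum_range_succ _ _
      have h6 : (∑ j ∈ range (m + 2 + 1), (-1:ℝ) ^ j * q ^ (j * (j - 1) / 2) * qb (n + 1 + 1) j * qb (n + (m + 2) - j) (m + 2 - j)) =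
          (∑ i ∈ range (m + 2), (-1:ℝ) ^ (i + 1) * q ^ ((i + 1) * ((i + 1) - 1) / 2) * qb (n + 1 + 1) (i + 1) * qb (n + (m + 2) - (i + 1)) (m + 2 - (i + 1))) + ((-1:ℝ) ^ 0 * q ^ (0 * (0 - 1) / 2) * qb (n + 1 + 1) 0 * qb (n + (m + 2) - 0) (m + 2 - 0)) := Finset.sum_range_succ' _ _
      have h7 : ∀ i ∈ range (m + 2), ((-1:ℝ) ^ (i + 1) * q ^ ((i + 1) * ((i + 1) - 1) / 2) * qb (n + 1 + 1) (i + 1) * qb (n + (m + 2) - (i + 1)) (m + 2 - (i + 1))) = ((-1:ℝ) ^ (i + 1) * q ^ ((i + 1) * ((i + 1) - 1) / 2) * qb (n + 1) (i + 1) * qb (n + (m + 2) - (i + 1)) (m + 2 - (i + 1))) + ((-1:ℝ) ^ (i + 1) * q ^ ((i + 1) * (i + 1 - 1) / 2) * q ^ (n + 1 - i) * qb (n + 1) i * qb (n + (m + 1) - i) (m + 1 - i)) := by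
        intro i hi
        have hp := pascalB (n + 1) i
        rw [hp,
          show n + (m + 2) - (i + 1) = n + (m + 1) - i from by omega,
          show m + 2 - (i + 1) = m + 1 - i from by omega]
        ring
      have h8 : ((-1:ℝ) ^ 0 * q ^ (0 * (0 - 1) / 2) * qb (n + 1 + 1) 0 * qb (n + (m + 2) - 0) (m + 2 - 0)) = ((-1:ℝ) ^ 0 * q ^ (0 * (0 - 1) / 2) * qb (n + 1) 0 * qb (n + (m + 2) - 0) (m + 2 - 0)) := by rw [qb_zero, qb_zero]
      have h9 : S n (m + 2) = (∑ i ∈ range (m + 2), (-1:ℝ) ^ (i + 1) * q ^ ((i + 1) * ((i + 1) - 1) / 2) * qb (n + 1) (i + 1) * qb (n + (m + 2) - (i + 1)) (m + 2 - (i + 1))) + ((-1:ℝ) ^ 0 * q ^ (0 * (0 - 1) / 2) * qb (n + 1) 0 * qb (n + (m + 2) - 0) (m + 2 - 0)) := by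
        rw [S_def, Finset.sum_range_succ']
      have h10 : ∀ i ∈ range (m + 2), ((-1:ℝ) ^ (i + 1) * q ^ ((i + 1) * (i + 1 - 1) / 2) * q ^ (n + 1 - i) * qb (n + 1) i * qb (n + (m + 1) - i) (m + 1 - i)) = -(q ^ (n + 1) * ((-1:ℝ) ^ i * q ^ (i * (i - 1) / 2) * qb (n + 1) i * qb (n + (m + 1) - i) (m + 1 - i))) := by
        intro i hi
        rcases le_or_gt i (n + 1) with h | h
        · have hpow : q ^ i * q ^ (n + 1 - i) = q ^ (n + 1) := by
            rw [← pow_add]; congr 1; omega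
          rw [s_succ, ← hpow]
          ring
        · rw [qb_eq_zero h]
          ring
      have h11 : S n (m + 1) = ∑ i ∈ range (m + 2), (-1:ℝ) ^ i * q ^ (i * (i - 1) / 2) * qb (n + 1) i * qb (n + (m + 1) - i) (m + 1 - i) := by
        rw [S_def, show m + 1 + 1 = m + 2 from by omega]
      have hs7 : (∑ i ∈ range (m + 2), (-1:ℝ) ^ (i + 1) * q ^ ((i + 1) * ((i + 1) - 1) / 2) * qb (n + 1 + 1) (i + 1) * qb (n + (m + 2) - (i + 1)) (m + 2 - (i + 1))) =
          (∑ i ∈ range (m + 2), (-1:ℝ) ^ (i + 1) * q ^ ((i + 1) * ((i + 1) - 1) / 2) * qb (n + 1) (i + 1) * qb (n + (m + 2) - (i + 1)) (m + 2 - (i + 1))) + (∑ i ∈ range (m + 2), (-1:ℝ) ^ (i + 1) * q ^ ((i + 1) * (i + 1 - 1) / 2) * q ^ (n + 1 - i) * qb (n + 1) i * qb (n + (m + 1) - i) (m + 1 - i)) := by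
        rw [Finset.sum_congr rfl h7, Finset.sum_add_distrib]
      have hs10 : (∑ i ∈ range (m + 2), (-1:ℝ) ^ (i + 1) * q ^ ((i + 1) * (i + 1 - 1) / 2) * q ^ (n + 1 - i) * qb (n + 1) i * qb (n + (m + 1) - i) (m + 1 - i)) =
          -(q ^ (n + 1) * (∑ i ∈ range (m + 2), (-1:ℝ) ^ i * q ^ (i * (i - 1) / 2) * qb (n + 1) i * qb (n + (m + 1) - i) (m + 1 - i))) := by
        rw [Finset.sum_congr rfl h10, Finset.mul_sum, ← Finset.sum_neg_distrib]
      have hQ0 : (∑ i ∈ range (m + 2), (-1:ℝ) ^ i * q ^ (i * (i - 1) / 2) * qb (n + 1) i * qb (n + (m + 1) - i) (m + 1 - i)) = 0 := by rw [← h11, IH m]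
      have hBq0 : (∑ j ∈ range (m + 2), (-1:ℝ) ^ j * q ^ (j * (j - 1) / 2) * qb (n + 1 + 1) j * qb (n + 1 + (m + 1) - j) (m + 1 - j)) = 0 := by rw [← h4, IHm]
      have hP0 : (∑ i ∈ range (m + 2), (-1:ℝ) ^ (i + 1) * q ^ ((i + 1) * ((i + 1) - 1) / 2) * qb (n + 1) (i + 1) * qb (n + (m + 2) - (i + 1)) (m + 2 - (i + 1))) + ((-1:ℝ) ^ 0 * q ^ (0 * (0 - 1) / 2) * qb (n + 1) 0 * qb (n + (m + 2) - 0) (m + 2 - 0)) = 0 := by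
        rw [← h9, hIH2]
      rw [hQ0, mul_zero, neg_zero] at hs10
      rw [h1, hs2, h3, hBq0]
      have := h5.symm.trans h6
      linarith [hs7, hs10, hP0, h8, this]

lemma gold_one_sub_q_ne_zero : goldenRatio * (1 - q) ≠ 0 :=
  mul_ne_zero goldenRatio_ne_zero (by simpa using one_sub_q_pow_ne_zero 1 le_rfl)

lemma fib_eq' (m : ℕ) : (Nat.fib m : ℝ) =
    goldenRatio ^ m * (1 - q ^ m) / (goldenRatio * (1 - q)) := by
  rw [eq_div_iff gold_one_sub_q_ne_zero]; exact fib_eq m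

lemma fib_ratio (m l : ℕ) : (Nat.fib m : ℝ) / (Nat.fib (l + 1) : ℝ) =
    goldenRatio ^ ((m : ℤ) - ((l : ℤ) + 1)) * ((1 - q ^ m) / (1 - q ^ (l + 1))) := by
  have h1 : goldenRatio ^ ((m : ℤ) - ((l : ℤ) + 1)) =
      goldenRatio ^ m / goldenRatio ^ (l + 1) := by
    rw [zpow_sub₀ goldenRatio_ne_zero, zpow_natCast,
      show ((l : ℤ) + 1) = ((l + 1 : ℕ) : ℤ) from by push_cast; ring, zpow_natCast]
  have h2 : (Nat.fib (l + 1) : ℝ) ≠ 0 :=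
    Nat.cast_ne_zero.mpr (Nat.fib_pos.mpr l.succ_pos).ne'
  rw [fib_eq' m, fib_eq' (l + 1), h1, div_div_div_comm, div_self gold_one_sub_q_ne_zero,
    div_one, mul_div_mul_comm]

lemma prod_zpow (f : ℕ → ℤ) (k : ℕ) :
    ∏ r ∈ range k, goldenRatio ^ (f r) = goldenRatio ^ (∑ r ∈ range k, f r) := by
  induction k with
  | zero => simp
  | succ k ih => rw [Finset.prod_range_succ, Finset.sum_range_succ, ih,
      ← zpow_add₀ goldenRatio_ne_zero]

lemma exp_sum (N k : ℕ) (h : k ≤ N) :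
    ∑ r ∈ range k, (((N - r : ℕ) : ℤ) - ((r : ℤ) + 1)) = ((k * (N - k) : ℕ) : ℤ) := by
  induction k with
  | zero => simp
  | succ k ih =>
    have hk : k ≤ N := by omega
    have e1 : ((N - k : ℕ) : ℤ) = (N : ℤ) - k := by omega
    have e2 : (((k + 1) * (N - (k + 1)) : ℕ) : ℤ) = ((k : ℤ) + 1) * ((N : ℤ) - ((k : ℤ) + 1)) := by
      have : ((N - (k + 1) : ℕ) : ℤ) = (N : ℤ) - ((k : ℤ) + 1) := by omega
      push_cast [← this]
      omega
    have e3 : ((k * (N - k) : ℕ) : ℤ) = (k : ℤ) * ((N : ℤ) - k) := by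
      push_cast [← e1]
      omega
    rw [Finset.sum_range_succ, ih hk, e3, e2, e1]
    ring

lemma fibonomial_qb (N k : ℕ) (h : k ≤ N) :
    fibonomial N k = goldenRatio ^ (k * (N - k)) * qb N k := by
  unfold fibonomial qb
  have hc : ∀ r ∈ range k, (Nat.fib (N - r) : ℝ) / (Nat.fib (r + 1) : ℝ)
      = goldenRatio ^ (((N - r : ℕ) : ℤ) - ((r : ℤ) + 1)) *
        ((1 - q ^ (N - r)) / (1 - q ^ (r + 1))) := fun r _ => fib_ratio (N - r) r
  rw [Finset.prod_congr rfl hc, Finset.prod_mul_distrib, prod_zpow, exp_sum N k h, zpow_natCast]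

lemma fibonomial_zero' (N k : ℕ) (h : N < k) : fibonomial N k = 0 := by
  unfold fibonomial
  refine Finset.prod_eq_zero (Finset.mem_range.mpr h) ?_
  simp [Nat.sub_self]

lemma pow_key (n m j : ℕ) (hj : j ≤ m) (h : j ≤ n + 1) :
    (-1:ℝ) ^ (j * (j + 1) / 2) * goldenRatio ^ (j * (n + 1 - j)) * goldenRatio ^ ((m - j) * n)
    = goldenRatio ^ (m * n) * ((-1:ℝ) ^ j * q ^ (j * (j - 1) / 2)) := by
  have htri : j * (j + 1) / 2 = j * (j - 1) / 2 + j := by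
    have h := tri0 j
    rwa [Nat.mul_comm (j + 1) j] at h
  have hexp : j * (n + 1 - j) + (m - j) * n + 2 * (j * (j - 1) / 2) = m * n := by
    rcases j with _ | i
    · norm_num
    · have hdvd : 2 ∣ (i + 1) * i := by
        rcases Nat.even_or_odd i with he | ho
        · exact Dvd.dvd.mul_left he.two_dvd _
        · exact Dvd.dvd.mul_right (Nat.even_add_one.mpr (Nat.not_even_iff_odd.mpr ho)).two_dvd _
      have h2 : 2 * ((i + 1) * ((i + 1) - 1) / 2) = (i + 1) * i := by
        rw [show (i + 1) - 1 = i from rfl, Nat.mul_div_cancel' hdvd]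
      rw [h2]
      zify [show i + 1 ≤ n + 1 from h, show i + 1 ≤ m from hj]
      ring
  have hfin : goldenRatio ^ (j * (n + 1 - j)) * goldenRatio ^ ((m - j) * n) *
      goldenRatio ^ (2 * (j * (j - 1) / 2)) = goldenRatio ^ (m * n) := by
    rw [← pow_add, ← pow_add, hexp]
  have hqD : q ^ (j * (j - 1) / 2) =
      (-1:ℝ) ^ (j * (j - 1) / 2) * (goldenRatio ^ (2 * (j * (j - 1) / 2)))⁻¹ := by
    rw [q_eq_neg_inv, neg_pow, inv_pow, ← pow_mul]
  have h9 : goldenRatio ^ (j * (n + 1 - j)) * goldenRatio ^ ((m - j) * n)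
      = goldenRatio ^ (m * n) * (goldenRatio ^ (2 * (j * (j - 1) / 2)))⁻¹ := by
    rw [eq_mul_inv_iff_mul_eq₀ (pow_ne_zero _ goldenRatio_ne_zero)]; exact hfin
  rw [htri, pow_add, hqD]
  linear_combination ((-1:ℝ) ^ (j * (j - 1) / 2) * (-1:ℝ) ^ j) * h9

lemma term_conv (n m j : ℕ) (hj : j ≤ m) :
    (-1:ℝ) ^ (j * (j + 1) / 2) * fibonomial (n + 1) j * fibonomial (n + m - j) (m - j)
    = goldenRatio ^ (m * n) *
      ((-1:ℝ) ^ j * q ^ (j * (j - 1) / 2) * qb (n + 1) j * qb (n + m - j) (m - j)) := by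
  rcases le_or_gt j (n + 1) with h | h
  · rw [fibonomial_qb (n + 1) j h, fibonomial_qb (n + m - j) (m - j) (by omega),
      show (n + m - j) - (m - j) = n from by omega]
    have key := pow_key n m j hj h
    linear_combination (qb (n + 1) j * qb (n + m - j) (m - j)) * key
  · rw [fibonomial_zero' (n + 1) j h, qb_eq_zero h]
    ring

lemma fib_ident (n m : ℕ) :
    ∑ j ∈ range (m + 1 + 1), (-1:ℝ) ^ (j * (j + 1) / 2) * fibonomial (n + 1) j *
      fibonomial (n + (m + 1) - j) ((m + 1) - j) = 0 := by
  have h0 := qident n m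
  have hc : ∑ j ∈ range (m + 1 + 1), (-1:ℝ) ^ (j * (j + 1) / 2) * fibonomial (n + 1) j *
      fibonomial (n + (m + 1) - j) ((m + 1) - j)
      = goldenRatio ^ ((m + 1) * n) * S n (m + 1) := by
    rw [S_def, Finset.mul_sum]
    apply Finset.sum_congr rfl
    intro j hj
    exact term_conv n (m + 1) j (by have := Finset.mem_range.mp hj; omega)
  rw [hc, h0, mul_zero]

noncomputable def ent (n : ℕ) (a : ℝ) (i l : ℕ) : ℝ :=
  if l = i + 1 then a
  else if l ≤ i then
    (-1:ℝ) ^ ((i - l + 1) * (i - l) / 2) * fibonomial (n + 1) (i - l + 1) / a ^ (i - l)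
  else 0

noncomputable def xf (n : ℕ) (a : ℝ) (l : ℕ) : ℝ :=
  (-1:ℝ) ^ l * fibonomial (n + l) l / a ^ l

lemma fibonomial_zero (N : ℕ) : fibonomial N 0 = 1 := by simp [fibonomial]

lemma xf_zero (n : ℕ) (a : ℝ) : xf n a 0 = 1 := by
  unfold xf
  norm_num [fibonomial_zero]

lemma rowcore (n i : ℕ) (a : ℝ) (ha : a ≠ 0) :
    ∑ l ∈ range (i + 1), ent n a i l * xf n a l
    = (-1:ℝ) ^ i * fibonomial (n + i + 1) (i + 1) / a ^ i := by
  have hrefl := Finset.sum_range_reflect (fun l => ent n a i l * xf n a l) (i + 1)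
  rw [← hrefl]
  have hidx : ∀ l ∈ range (i + 1), ent n a i (i + 1 - 1 - l) * xf n a (i + 1 - 1 - l)
      = ent n a i (i - l) * xf n a (i - l) := by
    intro l _
    rw [show i + 1 - 1 - l = i - l from by omega]
  have hterm : ∀ l ∈ range (i + 1), ent n a i (i - l) * xf n a (i - l)
      = ((-1:ℝ) ^ (i + 1) / a ^ i) * ((-1:ℝ) ^ ((l + 1) * (l + 1 + 1) / 2) *
          fibonomial (n + 1) (l + 1) * fibonomial (n + (i + 1) - (l + 1)) (i + 1 - (l + 1))) := by
    intro l hl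
    have hl' : l ≤ i := by have := Finset.mem_range.mp hl; omega
    unfold ent xf
    rw [if_neg (show ¬ (i - l = i + 1) from by omega), if_pos (show i - l ≤ i from by omega),
      show i - (i - l) = l from by omega,
      show n + (i + 1) - (l + 1) = n + (i - l) from by omega,
      show i + 1 - (l + 1) = i - l from by omega]
    have hs2 : (-1:ℝ) ^ (i - l) = (-1:ℝ) ^ (i + 1) * (-1:ℝ) ^ (l + 1) := by
      rw [← pow_add, show (i + 1) + (l + 1) = (i - l) + 2 * (l + 1) from by omega, pow_add,
        pow_mul]
      norm_num
    have e1 : (l + 1) * (l + 1 + 1) / 2 = (l + 1) * l / 2 + (l + 1) := by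
      have h2 : (l + 1) * (l + 1 + 1) = (l + 1) * l + (l + 1) * 2 := by ring
      rw [h2, Nat.add_mul_div_right _ _ (by norm_num : 0 < 2)]
    have hpow : a ^ l * a ^ (i - l) = a ^ i := by
      rw [← pow_add]; congr 1; omega
    rw [hs2, e1, pow_add (-1:ℝ) ((l + 1) * l / 2) (l + 1), div_mul_div_comm, hpow]
    ring
  rw [Finset.sum_congr rfl hidx, Finset.sum_congr rfl hterm, ← Finset.mul_sum]
  have hfib := fib_ident n i
  rw [Finset.sum_range_succ'] at hfib
  have hg0 : (-1:ℝ) ^ (0 * (0 + 1) / 2) * fibonomial (n + 1) 0 *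
      fibonomial (n + (i + 1) - 0) (i + 1 - 0) = fibonomial (n + i + 1) (i + 1) := by
    rw [fibonomial_zero, show n + (i + 1) - 0 = n + i + 1 from by omega,
      show i + 1 - 0 = i + 1 from by omega]
    norm_num
  rw [hg0] at hfib
  have hsum : ∑ l ∈ range (i + 1), ((-1:ℝ) ^ ((l + 1) * (l + 1 + 1) / 2) *
      fibonomial (n + 1) (l + 1) * fibonomial (n + (i + 1) - (l + 1)) (i + 1 - (l + 1)))
      = -(fibonomial (n + i + 1) (i + 1)) := by linarith [hfib]
  rw [hsum, pow_succ]
  ring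

lemma rowfull (n K i : ℕ) (hik : i < K) (a : ℝ) (ha : a ≠ 0) :
    ∑ l ∈ range K, ent n a i l * xf n a l =
    if i + 1 = K then (-1:ℝ) ^ i * fibonomial (n + K) K / a ^ i else 0 := by
  rcases eq_or_lt_of_le (show i + 1 ≤ K from hik) with he | hlt
  · rw [if_pos he, ← he, show n + (i + 1) = n + i + 1 from by omega]
    exact rowcore n i a ha
  · rw [if_neg (by omega)]
    have hsub : ∑ l ∈ range K, ent n a i l * xf n a l
        = ∑ l ∈ range (i + 2), ent n a i l * xf n a l := by
      symm
      apply Finset.sum_subset (Finset.range_subset_range.mpr (by omega))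
      intro x hx hx2
      have hx3 : i + 2 ≤ x := by
        by_contra hc
        exact hx2 (Finset.mem_range.mpr (by omega))
      unfold ent
      rw [if_neg (by omega), if_neg (by omega), zero_mul]
    rw [hsub, Finset.sum_range_succ, rowcore n i a ha]
    have hent : ent n a i (i + 1) = a := by unfold ent; rw [if_pos rfl]
    rw [hent]
    unfold xf
    rw [show n + (i + 1) = n + i + 1 from by omega, pow_succ (-1:ℝ), pow_succ a]
    field_simp
    ring

theorem main (n K : ℕ) (a : ℝ) (ha : a ≠ 0) :
    fibonomial (n + (K + 1)) (K + 1) =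
      (Matrix.of fun i j : Fin (K + 1) => ent n a (i : ℕ) (j : ℕ)).det := by
  set M : Matrix (Fin (K + 1)) (Fin (K + 1)) ℝ :=
    Matrix.of fun i j : Fin (K + 1) => ent n a (i : ℕ) (j : ℕ) with hM
  set c : ℝ := (-1:ℝ) ^ K * fibonomial (n + (K + 1)) (K + 1) / a ^ K with hc
  set B' : Matrix (Fin (K + 1)) (Fin (K + 1)) ℝ :=
    Matrix.of (fun i j : Fin (K + 1) =>
      if (j : ℕ) = 0 then (if (i : ℕ) = K then c else 0) else M i j) with hB'
  set U : Matrix (Fin (K + 1)) (Fin (K + 1)) ℝ :=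
    Matrix.of (fun i j : Fin (K + 1) =>
      if (j : ℕ) = 0 then (if (i : ℕ) = 0 then 1 else -(xf n a (i : ℕ)))
      else if i = j then 1 else 0) with hU
  have hrow : ∀ i : Fin (K + 1), (∑ l : Fin (K + 1), M i l * xf n a (l : ℕ)) =
      (if (i : ℕ) = K then c else 0) := by
    intro i
    have h1 := Fin.sum_univ_eq_sum_range (fun t => ent n a (i : ℕ) t * xf n a t) (K + 1)
    have h2 := rowfull n (K + 1) (i : ℕ) i.isLt a ha
    have h3 : (∑ l : Fin (K + 1), M i l * xf n a (l : ℕ)) =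
        ∑ t ∈ range (K + 1), ent n a (i : ℕ) t * xf n a t := h1
    rw [h3, h2]
    by_cases hi : (i : ℕ) = K
    · rw [if_pos (by omega), if_pos hi, hi, hc]
    · rw [if_neg (by omega), if_neg hi]
  have hfact : M = B' * U := by
    ext i j
    rw [Matrix.mul_apply]
    by_cases hj : (j : ℕ) = 0
    · have hj0 : j = 0 := Fin.ext (by simpa using hj)
      subst hj0
      rw [Fin.sum_univ_succ]
      have hU0 : U 0 0 = 1 := by simp [hU]
      have hUl : ∀ l : Fin K, U l.succ 0 = -(xf n a ((l : ℕ) + 1)) := by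
        intro l
        simp [hU, Fin.val_succ]
      have hB0 : B' i 0 = (if (i : ℕ) = K then c else 0) := by simp [hB']
      have hBl : ∀ l : Fin K, B' i l.succ = M i l.succ := by
        intro l
        simp [hB', Fin.val_succ]
      rw [hU0, hB0, mul_one]
      rw [Finset.sum_congr rfl (fun l _ => by rw [hUl l, hBl l])]
      have h2 := hrow i
      rw [Fin.sum_univ_succ] at h2
      have h20 : xf n a ((0 : Fin (K + 1)) : ℕ) = 1 := by
        rw [show ((0 : Fin (K + 1)) : ℕ) = 0 from rfl, xf_zero]
      rw [h20, mul_one] at h2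
      have h3 : (∑ l : Fin K, M i l.succ * -(xf n a ((l : ℕ) + 1))) =
          -(∑ l : Fin K, M i l.succ * xf n a ((l.succ : Fin (K + 1)) : ℕ)) := by
        rw [← Finset.sum_neg_distrib]
        apply Finset.sum_congr rfl
        intro l _
        rw [show ((l.succ : Fin (K + 1)) : ℕ) = (l : ℕ) + 1 from Fin.val_succ l]
        ring
      rw [h3]
      linarith [h2]
    · have hUj : ∀ l : Fin (K + 1), U l j = if l = j then 1 else 0 := by
        intro l
        simp [hU, hj, -Fin.val_eq_zero_iff]
      rw [Finset.sum_congr rfl (fun l _ => by rw [hUj l])]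
      simp only [mul_ite, mul_one, mul_zero]
      rw [Finset.sum_ite_eq' Finset.univ j]
      simp [hB', hj, -Fin.val_eq_zero_iff]
  have hdetU : U.det = 1 := by
    have htri : U.BlockTriangular OrderDual.toDual := by
      intro i j hij
      have hv : i < j := by simpa using hij
      have hv' : (i : ℕ) < (j : ℕ) := hv
      have hj0 : ¬ ((j : ℕ) = 0) := by omega
      have hij' : ¬ (i = j) := ne_of_lt hv
      simp [hU, hj0, hij', -Fin.val_eq_zero_iff]
    rw [Matrix.det_of_lowerTriangular U htri]
    apply Finset.prod_eq_one
    intro i _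
    by_cases hi : (i : ℕ) = 0
    · simp [hU, hi, -Fin.val_eq_zero_iff]
    · simp [hU, hi, -Fin.val_eq_zero_iff]
  have hdetB' : B'.det = fibonomial (n + (K + 1)) (K + 1) := by
    rw [Matrix.det_succ_column_zero]
    rw [Finset.sum_eq_single (Fin.last K)]
    · have hBlast : B' (Fin.last K) 0 = c := by simp [hB', Fin.val_last]
      have hminor : (B'.submatrix (Fin.last K).succAbove Fin.succ).det = a ^ K := by
        have hentry : ∀ r s : Fin K, (B'.submatrix (Fin.last K).succAbove Fin.succ) r s
            = ent n a (r : ℕ) ((s : ℕ) + 1) := by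
          intro r s
          rw [Matrix.submatrix_apply, Fin.succAbove_last]
          have hs1 : ((s.succ : Fin (K + 1)) : ℕ) = (s : ℕ) + 1 := Fin.val_succ s
          have : B' r.castSucc s.succ = M r.castSucc s.succ := by
            simp [hB', hs1]
          rw [this, hM]
          simp [Matrix.of_apply, hs1, Fin.val_succ]
        have htri2 : (B'.submatrix (Fin.last K).succAbove Fin.succ).BlockTriangular
            OrderDual.toDual := by
          intro r s hrs
          have hv : r < s := by simpa using hrs
          have hv' : (r : ℕ) < (s : ℕ) := hv
          rw [hentry r s]
          unfold ent
          rw [if_neg (by omega), if_neg (by omega)]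
        rw [Matrix.det_of_lowerTriangular _ htri2]
        have hdiag : ∀ r : Fin K, (B'.submatrix (Fin.last K).succAbove Fin.succ) r r = a := by
          intro r
          rw [hentry r r]
          unfold ent
          rw [if_pos rfl]
        rw [Finset.prod_congr rfl (fun r _ => hdiag r), Finset.prod_const, Finset.card_univ,
          Fintype.card_fin]
      rw [hBlast, hminor, Fin.val_last, hc]
      have h1 : (-1:ℝ) ^ K * (-1:ℝ) ^ K = 1 := by
        rw [← pow_add, ← two_mul, pow_mul]
        norm_num
      have h2 : (a : ℝ) ^ K ≠ 0 := pow_ne_zero _ ha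
      rw [show (-1:ℝ) ^ K * ((-1:ℝ) ^ K * fibonomial (n + (K + 1)) (K + 1) / a ^ K) * a ^ K
          = ((-1:ℝ) ^ K * (-1:ℝ) ^ K) * fibonomial (n + (K + 1)) (K + 1) * (a ^ K / a ^ K)
          from by ring, h1, div_self h2, mul_one, one_mul]
    · intro i _ hne
      have hiK : ¬ ((i : ℕ) = K) := by
        intro h
        exact hne (Fin.ext (by simp [h, Fin.val_last]))
      have : B' i 0 = 0 := by simp [hB', hiK]
      rw [this]
      ring
    · intro h
      exact absurd (Finset.mem_univ _) h
  calc fibonomial (n + (K + 1)) (K + 1) = B'.det * U.det := by rw [hdetB', hdetU, mul_one]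
    _ = (B' * U).det := (Matrix.det_mul _ _).symm
    _ = M.det := by rw [← hfact]

end FibDetAux

theorem fibonomial_det_hessenberg_column_general (n k : ℕ) (hk : 1 ≤ k)
    (a : ℝ) (ha : a ≠ 0) :
    fibonomial (n + k) k =
      Matrix.det (Matrix.of fun i j : Fin k =>
        if (j : ℕ) = (i : ℕ) + 1 then a
        else if (j : ℕ) ≤ (i : ℕ) then
          (-1 : ℝ) ^ ((((i : ℕ) - (j : ℕ)) + 1) * ((i : ℕ) - (j : ℕ)) / 2) *
            fibonomial (n + 1) (((i : ℕ) - (j : ℕ)) + 1) / a ^ ((i : ℕ) - (j : ℕ))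
        else 0) := by
  obtain ⟨K, rfl⟩ : ∃ K, k = K + 1 := ⟨k - 1, by omega⟩
  have heq : (Matrix.of fun i j : Fin (K + 1) =>
        if (j : ℕ) = (i : ℕ) + 1 then a
        else if (j : ℕ) ≤ (i : ℕ) then
          (-1 : ℝ) ^ ((((i : ℕ) - (j : ℕ)) + 1) * ((i : ℕ) - (j : ℕ)) / 2) *
            fibonomial (n + 1) (((i : ℕ) - (j : ℕ)) + 1) / a ^ ((i : ℕ) - (j : ℕ))
        else 0)
      = (Matrix.of fun i j : Fin (K + 1) => FibDetAux.ent n a (i : ℕ) (j : ℕ)) := by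
    ext i j
    simp only [Matrix.of_apply, FibDetAux.ent]
  rw [heq]
  exact FibDetAux.main n K a ha
end

section
/- For all integers n ≥ 0 and k ≥ 1: C(n+1, k)_F = Σ ((t_1+⋯+t_k)! / (t_1! ⋯ t_k!)) · (−1)^{k(k−1)/2 + k − (t_1+⋯+t_k)} · ∏_{j=1}^{k} (C(n+j, n)_F)^{t_j}, where the sum ranges over all tuples (t_1, …, t_k) of nonnegative integers satisfying t_1 + 2t_2 + ⋯ + k t_k = k. -/
open scoped goldenRatio

namespace Trudi




def E : List ℝ → ℕ → ℝ
  | _, 0 => 1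
  | [], _+1 => 0
  | a :: l, k+1 => E l (k+1) + a * E l k

def H : List ℝ → ℕ → ℝ
  | _, 0 => 1
  | [], _+1 => 0
  | a :: l, k+1 => H l (k+1) + a * H (a :: l) k
  termination_by l k => (l.length, k)

@[simp] theorem E_zero (l : List ℝ) : E l 0 = 1 := by cases l <;> rfl
@[simp] theorem H_zero (l : List ℝ) : H l 0 = 1 := by cases l <;> rw [H]
@[simp] theorem E_nil (k : ℕ) : E [] (k+1) = 0 := rfl
@[simp] theorem H_nil (k : ℕ) : H [] (k+1) = 0 := by rw [H]
theorem E_cons (a : ℝ) (l : List ℝ) (k : ℕ) : E (a::l) (k+1) = E l (k+1) + a * E l k := rfl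
theorem H_cons (a : ℝ) (l : List ℝ) (k : ℕ) : H (a::l) (k+1) = H l (k+1) + a * H (a::l) k := by
  rw [H]

theorem E_eq_H_one : ∀ l : List ℝ, E l 1 = H l 1
  | [] => by rw [E_nil, H_nil]
  | a :: l => by rw [E_cons, H_cons]; simp [E_eq_H_one l]

def S (l : List ℝ) (k : ℕ) : ℝ := ∑ j ∈ Finset.range (k+1), (-1)^j * H l j * E l (k - j)

theorem S_cons (a : ℝ) (l : List ℝ) (K : ℕ) :
    S (a::l) (K+1) = S l (K+1) + a * S l K - a * S (a::l) K := by
  have e1 : S (a::l) (K+1) =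
      (∑ j ∈ Finset.range (K+1), (-1)^(j+1) * H l (j+1) * E (a::l) (K-j))
      + a * (∑ j ∈ Finset.range (K+1), (-1)^(j+1) * H (a::l) j * E (a::l) (K-j))
      + E (a::l) (K+1) := by
    rw [S, Finset.sum_range_succ']
    simp only [Nat.succ_sub_succ, pow_zero, one_mul, Nat.sub_zero, H_zero]
    rw [Finset.sum_congr rfl (fun j _ => show
        (-1:ℝ)^(j+1) * H (a::l) (j+1) * E (a::l) (K-j)
        = (-1)^(j+1) * H l (j+1) * E (a::l) (K-j)
          + a * ((-1)^(j+1) * H (a::l) j * E (a::l) (K-j)) by rw [H_cons]; ring),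
      Finset.sum_add_distrib, ← Finset.mul_sum]
  have e2 : (∑ j ∈ Finset.range (K+1), (-1:ℝ)^(j+1) * H (a::l) j * E (a::l) (K-j))
      = - S (a::l) K := by
    rw [S, ← Finset.sum_neg_distrib]
    exact Finset.sum_congr rfl fun j _ => by ring
  have e3 : (∑ j ∈ Finset.range (K+1), (-1:ℝ)^(j+1) * H l (j+1) * E (a::l) (K-j))
      + E (a::l) (K+1) = S l (K+1) + a * S l K := by
    have hS1 : S l (K+1) = (∑ j ∈ Finset.range (K+1), (-1:ℝ)^(j+1) * H l (j+1) * E l (K-j))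
        + E l (K+1) := by
      rw [S, Finset.sum_range_succ']
      simp [Nat.succ_sub_succ]
    have hS0 : S l K = (∑ j ∈ Finset.range K, (-1:ℝ)^(j+1) * H l (j+1) * E l (K-1-j))
        + E l K := by
      cases K with
      | zero => simp [S]
      | succ m =>
        rw [S, Finset.sum_range_succ']
        simp [Nat.succ_sub_succ, Nat.succ_sub_one]
    rw [hS1, hS0, E_cons, Finset.sum_range_succ, Finset.sum_range_succ,
      Finset.sum_congr rfl (fun j hj => show
        (-1:ℝ)^(j+1) * H l (j+1) * E (a::l) (K-j)
        = (-1)^(j+1) * H l (j+1) * E l (K-j) + a * ((-1)^(j+1) * H l (j+1) * E l (K-1-j)) by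
          have hj' := Finset.mem_range.mp hj
          have h1 : K - j = (K-1-j) + 1 := by omega
          rw [h1, E_cons, ← h1]; ring),
      Finset.sum_add_distrib]
    have : K - K = 0 := by omega
    rw [this]
    simp only [E_zero, Finset.mul_sum, mul_add]
    ring
  rw [e1, e2]; linarith [e3]

theorem S_eq_zero : ∀ (k : ℕ), 1 ≤ k → ∀ l : List ℝ, S l k = 0
  | 0, h => by omega
  | 1, _ => fun l => by
    simp [S, Finset.sum_range_succ, E_eq_H_one l]
  | (K+2), _ => by
    intro l
    induction l with
    | nil =>
      rw [S]
      refine Finset.sum_eq_zero fun j hj => ?_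
      rcases j with _ | j
      · have : K + 2 - 0 = (K+1)+1 := by omega
        rw [this]; simp
      · simp
    | cons a l ih =>
      rw [S_cons]
      rw [ih, S_eq_zero (K+1) (by omega) l, S_eq_zero (K+1) (by omega) (a::l)]
      ring

/-- E in terms of H : the defining recurrence. -/
theorem E_eq_sum (l : List ℝ) (k : ℕ) (hk : 1 ≤ k) :
    E l k = ∑ j ∈ Finset.range k, (-1)^j * H l (j+1) * E l (k - (j+1)) := by
  have h := S_eq_zero k hk l
  rw [S] at h
  obtain ⟨K, rfl⟩ := Nat.exists_eq_add_of_le hk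
  rw [Finset.sum_range_succ'] at h
  simp only [pow_zero, one_mul, Nat.sub_zero, H_zero] at h
  have h2 : E l (1+K) = ∑ j ∈ Finset.range (1+K),
      -((-1:ℝ)^(j+1) * H l (j+1) * E l (1+K-(j+1))) := by
    rw [Finset.sum_neg_distrib]; linarith
  rw [h2]
  exact Finset.sum_congr rfl fun j _ => by ring



theorem fibR_add (m k : ℕ) :
    (Nat.fib (m + k) : ℝ) = ψ ^ k * Nat.fib m + φ ^ m * Nat.fib k := by
  have h5 : Real.sqrt 5 ≠ 0 := by
    positivity
  rw [Real.coe_fib_eq, Real.coe_fib_eq, Real.coe_fib_eq, pow_add]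
  field_simp
  ring

theorem fibR_succ_ne (m : ℕ) : (Nat.fib (m+1) : ℝ) ≠ 0 := by
  have := Nat.fib_pos.mpr (Nat.succ_pos m)
  positivity

theorem fibden_ne (k : ℕ) : (∏ r ∈ Finset.range k, (Nat.fib (r+1) : ℝ)) ≠ 0 :=
  Finset.prod_ne_zero_iff.mpr fun r _ => fibR_succ_ne r

theorem fibonomial_div (n k : ℕ) :
    fibonomial n k = (∏ r ∈ Finset.range k, (Nat.fib (n - r) : ℝ)) /
      (∏ r ∈ Finset.range k, (Nat.fib (r+1) : ℝ)) := by
  rw [fibonomial, Finset.prod_div_distrib]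

@[simp] theorem fibonomial_zero (n : ℕ) : fibonomial n 0 = 1 := by
  simp [fibonomial]

theorem fibonomial_self (m : ℕ) : fibonomial m m = 1 := by
  rw [fibonomial_div]
  rw [show (∏ r ∈ Finset.range m, (Nat.fib (m - r) : ℝ))
      = ∏ r ∈ Finset.range m, (Nat.fib (r+1) : ℝ) by
    rw [← Finset.prod_range_reflect (fun j => (Nat.fib (j+1) : ℝ)) m]
    refine Finset.prod_congr rfl fun r hr => ?_
    have := Finset.mem_range.mp hr
    congr 2
    omega]
  exact div_self (fibden_ne m)

theorem fibonomial_eq_zero {n k : ℕ} (h : n < k) : fibonomial n k = 0 := by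
  rw [fibonomial]
  refine Finset.prod_eq_zero (Finset.mem_range.mpr h) ?_
  simp

/-- H-side Pascal-type recurrence. -/
theorem fib_pascal_H (n J : ℕ) :
    fibonomial (n+1+J) (n+1) = ψ^J * fibonomial (n+J) n
      + φ^(n+1) * fibonomial (n+J) (n+1) := by
  have h1 : (∏ r ∈ Finset.range (n+1), (Nat.fib (n+1+J - r) : ℝ))
      = (Nat.fib (n+1+J) : ℝ) * ∏ r ∈ Finset.range n, (Nat.fib (n+J - r) : ℝ) := by
    rw [Finset.prod_range_succ']
    rw [Finset.prod_congr rfl (fun r hr => show (Nat.fib (n+1+J - (r+1)) : ℝ)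
      = (Nat.fib (n+J - r) : ℝ) by congr 2; omega)]
    rw [mul_comm, Nat.sub_zero]
  have h2 : (∏ r ∈ Finset.range (n+1), (Nat.fib (n+J - r) : ℝ))
      = (∏ r ∈ Finset.range n, (Nat.fib (n+J - r) : ℝ)) * (Nat.fib J : ℝ) := by
    rw [Finset.prod_range_succ, show n+J-n = J by omega]
  have h3 : (∏ r ∈ Finset.range (n+1), (Nat.fib (r+1) : ℝ))
      = (∏ r ∈ Finset.range n, (Nat.fib (r+1) : ℝ)) * (Nat.fib (n+1) : ℝ) := by
    rw [Finset.prod_range_succ]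
  rw [fibonomial_div, fibonomial_div, fibonomial_div, h1, h2, h3]
  rw [show ((n:ℕ)+1+J) = (n+1) + J from rfl, fibR_add (n+1) J]
  have hQ := fibden_ne n
  have hf := fibR_succ_ne n
  field_simp

/-- E-side Pascal-type recurrence. -/
theorem fib_pascal_E (n K : ℕ) :
    fibonomial (n+2) (K+1) = ψ^(K+1) * fibonomial (n+1) (K+1)
      + φ^(n+1) * (-ψ)^K * fibonomial (n+1) K := by
  rcases le_or_gt K (n+1) with hK | hK
  · have h1 : (∏ r ∈ Finset.range (K+1), (Nat.fib (n+2 - r) : ℝ))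
        = (Nat.fib (n+2) : ℝ) * ∏ r ∈ Finset.range K, (Nat.fib (n+1 - r) : ℝ) := by
      rw [Finset.prod_range_succ']
      rw [Finset.prod_congr rfl (fun r hr => show (Nat.fib (n+2 - (r+1)) : ℝ)
        = (Nat.fib (n+1 - r) : ℝ) by congr 2; omega)]
      rw [mul_comm, Nat.sub_zero]
    have h2 : (∏ r ∈ Finset.range (K+1), (Nat.fib (n+1 - r) : ℝ))
        = (∏ r ∈ Finset.range K, (Nat.fib (n+1 - r) : ℝ)) * (Nat.fib (n+1-K) : ℝ) := by
      rw [Finset.prod_range_succ]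
    have h3 : (∏ r ∈ Finset.range (K+1), (Nat.fib (r+1) : ℝ))
        = (∏ r ∈ Finset.range K, (Nat.fib (r+1) : ℝ)) * (Nat.fib (K+1) : ℝ) := by
      rw [Finset.prod_range_succ]
    have hsc : (Nat.fib (n+2) : ℝ) = ψ^(K+1) * Nat.fib (n+1-K) + φ^(n+1-K) * Nat.fib (K+1) := by
      have := fibR_add (n+1-K) (K+1)
      rw [show (n+1-K) + (K+1) = n+2 by omega] at this
      exact this
    have hphi : φ^(n+1) * (-ψ)^K = φ^(n+1-K) := by
      rw [show n+1 = (n+1-K) + K by omega, pow_add, mul_assoc, ← mul_pow,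
        mul_neg, Real.goldenRatio_mul_goldenConj]
      norm_num
    rw [fibonomial_div, fibonomial_div, fibonomial_div, h1, h2, h3, hsc, hphi]
    have hQ := fibden_ne K
    have hf := fibR_succ_ne K
    field_simp
  · rw [fibonomial_eq_zero (by omega), fibonomial_eq_zero (by omega),
      fibonomial_eq_zero (show n+1 < K by omega)]
    ring


theorem E_scale (c : ℝ) : ∀ (k : ℕ) (l : List ℝ), E (l.map (c * ·)) k = c ^ k * E l k
  | 0, l => by simp
  | k+1, [] => by simp
  | k+1, a :: l => by
    simp only [List.map_cons, E_cons, E_scale c (k+1) l, E_scale c k l]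
    ring

theorem H_scale (c : ℝ) : ∀ (k : ℕ) (l : List ℝ), H (l.map (c * ·)) k = c ^ k * H l k
  | 0, l => by simp
  | k+1, [] => by simp
  | k+1, a :: l => by
    simp only [List.map_cons, H_cons]
    rw [H_scale c (k+1) l, show (c*a) :: l.map (c * ·) = ((a::l).map (c * ·)) by simp,
      H_scale c k (a::l)]
    ring

/-- The list `[φ^n, φ^(n-1)ψ, …, ψ^n]`. -/
noncomputable def L : ℕ → List ℝ
  | 0 => [1]
  | n+1 => φ^(n+1) :: (L n).map (ψ * ·)

theorem L_succ (n : ℕ) : L (n+1) = φ^(n+1) :: (L n).map (ψ * ·) := rfl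

theorem H_one_list : ∀ j, H [(1:ℝ)] j = 1
  | 0 => H_zero _
  | j+1 => by rw [H_cons, H_nil, H_one_list j]; ring

theorem H_L : ∀ n j, H (L n) j = fibonomial (n+j) n := by
  intro n
  induction n with
  | zero =>
    intro j
    rw [show L 0 = [1] from rfl, H_one_list]
    simp
  | succ n ih =>
    intro j
    induction j with
    | zero => rw [H_zero]; exact (fibonomial_self (n+1)).symm
    | succ j ihj =>
      have key : H (L (n+1)) (j+1) = ψ^(j+1) * H (L n) (j+1) + φ^(n+1) * H (L (n+1)) j := by
        rw [L_succ, H_cons, H_scale, ← L_succ]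
      rw [key, ih (j+1), ihj, show n+1+j = n+(j+1) by omega]
      exact (fib_pascal_H n (j+1)).symm

theorem tri_succ (K : ℕ) : (K+1)*K/2 = K*(K-1)/2 + K := by
  have h : K*(K-1) + 2*K = (K+1)*K := by
    cases K with
    | zero => rfl
    | succ m => simp [Nat.succ_sub_one]; ring
  have h2 : Even (K*(K-1)) := by
    cases K with
    | zero => simp
    | succ m => simpa [Nat.succ_sub_one, mul_comm] using Nat.even_mul_succ_self m
  obtain ⟨b, hb⟩ := h2
  omega

theorem E_L : ∀ n k, E (L n) k = (-1:ℝ)^(k*(k-1)/2) * fibonomial (n+1) k := by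
  intro n
  induction n with
  | zero =>
    intro k
    match k with
    | 0 => simp
    | 1 =>
      rw [show L 0 = [1] from rfl, show (1:ℕ)*(1-1)/2 = 0 from rfl, E_cons,
        fibonomial_self]
      simp
    | (K+2) =>
      rw [show L 0 = [1] from rfl, E_cons, E_nil, E_nil,
        fibonomial_eq_zero (show 1 < K+2 by omega)]
      ring
  | succ n ih =>
    intro k
    match k with
    | 0 => simp
    | (K+1) =>
      rw [L_succ, E_cons, E_scale, E_scale, ih (K+1), ih K, fib_pascal_E n K]
      rw [show (K+1) - 1 = K from rfl, tri_succ K, pow_add]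
      have hx : ((-1:ℝ))^K * (-1)^K = 1 := by rw [← mul_pow]; norm_num
      have hnp : ((-ψ):ℝ)^K = (-1)^K * ψ^K := by rw [neg_pow]
      rw [hnp]
      set x := ((-1:ℝ))^K with hxdef
      set s := ((-1:ℝ))^(K*(K-1)/2) with hsdef
      set c0 := fibonomial (n+1) K
      set c1 := fibonomial (n+1) (K+1)
      linear_combination (-(φ^(n+1) * ψ^K * s * c0)) * hx




variable (b : ℕ → ℝ)

noncomputable def W (d : ℕ) (b : ℕ → ℝ) (t : Fin d → ℕ) : ℝ :=
  (((∑ j : Fin d, t j).factorial : ℝ) / ∏ j : Fin d, ((t j).factorial : ℝ))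
    * ∏ j : Fin d, b ((j:ℕ)+1) ^ (t j)

def box (d N : ℕ) : Finset (Fin d → ℕ) := Fintype.piFinset fun _ => Finset.range N

theorem mem_box {d N : ℕ} {t : Fin d → ℕ} : t ∈ box d N ↔ ∀ i, t i < N := by
  simp [box]

noncomputable def TT (b : ℕ → ℝ) (d s : ℕ) : ℝ :=
  ∑ t ∈ (box d (s+1)).filter (fun t => ∑ j : Fin d, ((j:ℕ)+1) * t j = s), W d b t

theorem cond_le {d s : ℕ} {t : Fin d → ℕ} (h : ∑ j : Fin d, ((j:ℕ)+1) * t j = s) (i : Fin d) :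
    t i ≤ s := by
  calc t i ≤ ((i:ℕ)+1) * t i := Nat.le_mul_of_pos_left _ (Nat.succ_pos _)
  _ ≤ ∑ j : Fin d, ((j:ℕ)+1) * t j :=
      Finset.single_le_sum (f := fun j : Fin d => ((j:ℕ)+1) * t j)
        (fun j _ => Nat.zero_le _) (Finset.mem_univ i)
  _ = s := h

theorem filter_box_eq {d s N : ℕ} (hN : s + 1 ≤ N) :
    (box d N).filter (fun t => ∑ j : Fin d, ((j:ℕ)+1) * t j = s)
      = (box d (s+1)).filter (fun t => ∑ j : Fin d, ((j:ℕ)+1) * t j = s) := by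
  ext t
  simp only [Finset.mem_filter, mem_box]
  constructor
  · rintro ⟨_, h⟩
    exact ⟨fun i => Nat.lt_succ_of_le (cond_le h i), h⟩
  · rintro ⟨ht, h⟩
    exact ⟨fun i => lt_of_lt_of_le (ht i) hN, h⟩

@[simp] theorem TT_zero (d : ℕ) : TT b d 0 = 1 := by
  rw [TT]
  have he : (box d 1).filter (fun t => ∑ j : Fin d, ((j:ℕ)+1) * t j = 0)
      = {fun _ => 0} := by
    ext t
    simp only [Finset.mem_filter, mem_box, Finset.mem_singleton]
    constructor
    · rintro ⟨ht, _⟩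
      funext i
      exact Nat.lt_one_iff.mp (ht i)
    · rintro rfl
      simp
  rw [he, Finset.sum_singleton, W]
  simp

theorem TT_rec (d s : ℕ) (hs : 1 ≤ s) (hsd : s ≤ d) :
    TT b d s = ∑ j ∈ Finset.range s, b (j+1) * TT b d (s - (j+1)) := by
  classical
  set A := (box d (s+1)).filter (fun t => ∑ j : Fin d, ((j:ℕ)+1) * t j = s) with hA
  have memA : ∀ {t}, t ∈ A ↔ (∀ i, t i ≤ s) ∧ ∑ j : Fin d, ((j:ℕ)+1) * t j = s := by
    intro t
    rw [hA, Finset.mem_filter, mem_box]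
    constructor
    · rintro ⟨h1, h2⟩; exact ⟨fun i => Nat.lt_succ_iff.mp (h1 i), h2⟩
    · rintro ⟨h1, h2⟩; exact ⟨fun i => Nat.lt_succ_of_le (h1 i), h2⟩
  set g : Fin d → (Fin d → ℕ) → ℝ := fun j t =>
    ((t j : ℝ)) * ((((∑ i : Fin d, t i) - 1).factorial : ℝ) / ∏ i : Fin d, ((t i).factorial : ℝ))
      * ∏ i : Fin d, b ((i:ℕ)+1) ^ (t i) with hg
  have stepA : ∀ t ∈ A, W d b t = ∑ j : Fin d, g j t := by
    intro t ht
    have hcond := (memA.mp ht).2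
    have hm : 0 < ∑ i : Fin d, t i := by
      rcases Nat.eq_zero_or_pos (∑ i : Fin d, t i) with h0 | h
      · exfalso
        have hz : ∀ i, t i = 0 := fun i =>
          Finset.sum_eq_zero_iff.mp h0 i (Finset.mem_univ i)
        rw [Finset.sum_congr rfl (fun j _ => by rw [hz j, Nat.mul_zero])] at hcond
        simp at hcond
        omega
      · exact h
    have hfact : ((∑ i : Fin d, t i).factorial : ℝ)
        = (∑ i : Fin d, (t i : ℝ)) * (((∑ i : Fin d, t i) - 1).factorial : ℝ) := by
      rw [← Nat.cast_sum, ← Nat.cast_mul, Nat.mul_factorial_pred hm.ne']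
    rw [W, hfact, hg]
    rw [mul_div_assoc, mul_assoc, Finset.sum_mul]
    exact Finset.sum_congr rfl fun j _ => by ring
  rw [TT, ← hA, Finset.sum_congr rfl stepA, Finset.sum_comm]
  have stepC : ∀ j : Fin d, (∑ t ∈ A, g j t)
      = if (j:ℕ)+1 ≤ s then b ((j:ℕ)+1) * TT b d (s - ((j:ℕ)+1)) else 0 := by
    intro j
    have hrestrict : (∑ t ∈ A, g j t) = ∑ t ∈ A.filter (fun t => t j ≠ 0), g j t := by
      refine (Finset.sum_filter_of_ne fun t _ hgt => ?_).symm
      intro h0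
      apply hgt
      rw [hg]
      simp [h0]
    rw [hrestrict]
    by_cases hj : (j:ℕ)+1 ≤ s
    · rw [if_pos hj]
      have hsub : s - ((j:ℕ)+1) + 1 ≤ s + 1 := by omega
      rw [TT, ← filter_box_eq hsub, Finset.mul_sum]
      have hsplit : ∀ (t : Fin d → ℕ), ∑ i : Fin d, ((i:ℕ)+1) * t i
          = ((j:ℕ)+1) * t j + ∑ i ∈ Finset.univ \ {j}, ((i:ℕ)+1) * t i := fun t =>
        Finset.sum_eq_add_sum_sdiff_singleton_of_mem (Finset.mem_univ j) _
      have hupd_sum : ∀ (t : Fin d → ℕ) (v : ℕ),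
          ∑ i : Fin d, ((i:ℕ)+1) * (Function.update t j v) i
          = ((j:ℕ)+1) * v + ∑ i ∈ Finset.univ \ {j}, ((i:ℕ)+1) * t i := by
        intro t v
        rw [hsplit (Function.update t j v), Function.update_self]
        congr 1
        refine Finset.sum_congr rfl fun i hi => ?_
        have hij : i ≠ j := by
          rw [Finset.mem_sdiff, Finset.mem_singleton] at hi
          exact hi.2
        rw [Function.update_of_ne hij]
      refine Finset.sum_nbij' (fun t => Function.update t j (t j - 1))
        (fun u => Function.update u j (u j + 1)) ?_ ?_ ?_ ?_ ?_
      · -- forward membership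
        intro t ht
        rw [Finset.mem_filter] at ht
        obtain ⟨htA, htj⟩ := ht
        rw [memA] at htA
        obtain ⟨hbd, hc⟩ := htA
        rw [Finset.mem_filter, mem_box]
        constructor
        · intro i
          show Function.update t j (t j - 1) i < s + 1
          have h1 := hbd i
          have h2 := hbd j
          rcases eq_or_ne i j with rfl | hij
          · rw [Function.update_self]; omega
          · rw [Function.update_of_ne hij]; omega
        · show ∑ i : Fin d, ((i:ℕ)+1) * (Function.update t j (t j - 1)) i = s - ((j:ℕ)+1)
          rw [hupd_sum]
          obtain ⟨c, hcc⟩ := Nat.exists_eq_succ_of_ne_zero htj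
          rw [hsplit t, hcc, Nat.mul_succ] at hc
          rw [hcc, Nat.succ_sub_one]
          omega
      · -- backwards membership
        intro u hu
        rw [Finset.mem_filter, mem_box] at hu
        obtain ⟨hbd, hc⟩ := hu
        have huj : u j ≤ s - ((j:ℕ)+1) := cond_le hc j
        rw [Finset.mem_filter, memA]
        refine ⟨⟨?_, ?_⟩, ?_⟩
        · intro i
          show Function.update u j (u j + 1) i ≤ s
          have h1 := cond_le hc i
          rcases eq_or_ne i j with rfl | hij
          · rw [Function.update_self]; omega
          · rw [Function.update_of_ne hij]; omega
        · show ∑ i : Fin d, ((i:ℕ)+1) * (Function.update u j (u j + 1)) i = s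
          rw [hupd_sum, Nat.mul_succ]
          rw [hsplit u] at hc
          omega
        · show Function.update u j (u j + 1) j ≠ 0
          rw [Function.update_self]
          omega
      · -- left inverse
        intro t ht
        have htj' : t j ≠ 0 := (Finset.mem_filter.mp ht).2
        funext i
        show Function.update (Function.update t j (t j - 1)) j
          (Function.update t j (t j - 1) j + 1) i = t i
        rcases eq_or_ne i j with rfl | hij
        · rw [Function.update_self, Function.update_self]
          omega
        · rw [Function.update_of_ne hij, Function.update_of_ne hij]
      · -- right inverse
        intro u hu
        funext i
        show Function.update (Function.update u j (u j + 1)) j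
          (Function.update u j (u j + 1) j - 1) i = u i
        rcases eq_or_ne i j with rfl | hij
        · rw [Function.update_self, Function.update_self]
          omega
        · rw [Function.update_of_ne hij, Function.update_of_ne hij]
      · -- weights
        intro t ht
        show g j t = b ((j:ℕ)+1) * W d b (Function.update t j (t j - 1))
        rw [Finset.mem_filter] at ht
        obtain ⟨htA, htj⟩ := ht
        have htjpos : 0 < t j := Nat.pos_of_ne_zero htj
        set u := Function.update t j (t j - 1) with hu
        have hMsum : ∑ i : Fin d, u i = (∑ i : Fin d, t i) - 1 := by
          have h1 : ∑ i : Fin d, t i = t j + ∑ i ∈ Finset.univ \ {j}, t i :=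
            Finset.sum_eq_add_sum_sdiff_singleton_of_mem (Finset.mem_univ j) _
          have h2 : ∑ i : Fin d, u i = (t j - 1) + ∑ i ∈ Finset.univ \ {j}, t i := by
            rw [Finset.sum_eq_add_sum_sdiff_singleton_of_mem (Finset.mem_univ j) u, hu,
              Function.update_self]
            congr 1
            refine Finset.sum_congr rfl fun i hi => ?_
            have hij : i ≠ j := by
              rw [Finset.mem_sdiff, Finset.mem_singleton] at hi
              exact hi.2
            rw [Function.update_of_ne hij]
          omega
        have hprodfac : (∏ i : Fin d, (t i).factorial)
            = t j * ∏ i : Fin d, (u i).factorial := by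
          rw [Finset.prod_eq_mul_prod_sdiff_singleton_of_mem (Finset.mem_univ j)
              (fun i => (t i).factorial),
            Finset.prod_eq_mul_prod_sdiff_singleton_of_mem (Finset.mem_univ j)
              (fun i => (u i).factorial)]
          have heq : ∏ i ∈ Finset.univ \ {j}, (u i).factorial
              = ∏ i ∈ Finset.univ \ {j}, (t i).factorial := by
            refine Finset.prod_congr rfl fun i hi => ?_
            have hij : i ≠ j := by
              rw [Finset.mem_sdiff, Finset.mem_singleton] at hi
              exact hi.2
            rw [hu, Function.update_of_ne hij]
          rw [heq, hu, Function.update_self, ← mul_assoc, Nat.mul_factorial_pred htjpos.ne']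
        have hprodb : (∏ i : Fin d, b ((i:ℕ)+1) ^ (t i))
            = b ((j:ℕ)+1) * ∏ i : Fin d, b ((i:ℕ)+1) ^ (u i) := by
          rw [Finset.prod_eq_mul_prod_sdiff_singleton_of_mem (Finset.mem_univ j)
              (fun i => b ((i:ℕ)+1) ^ (t i)),
            Finset.prod_eq_mul_prod_sdiff_singleton_of_mem (Finset.mem_univ j)
              (fun i => b ((i:ℕ)+1) ^ (u i))]
          have heq : ∏ i ∈ Finset.univ \ {j}, b ((i:ℕ)+1) ^ (u i)
              = ∏ i ∈ Finset.univ \ {j}, b ((i:ℕ)+1) ^ (t i) := by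
            refine Finset.prod_congr rfl fun i hi => ?_
            have hij : i ≠ j := by
              rw [Finset.mem_sdiff, Finset.mem_singleton] at hi
              exact hi.2
            rw [hu, Function.update_of_ne hij]
          rw [heq, hu, Function.update_self, ← mul_assoc,
            show b ((j:ℕ)+1) * b ((j:ℕ)+1) ^ (t j - 1) = b ((j:ℕ)+1) ^ (t j) by
              rw [← pow_succ']
              congr 1
              omega]
        have hfacR : (∏ i : Fin d, ((t i).factorial : ℝ))
            = (t j : ℝ) * ∏ i : Fin d, ((u i).factorial : ℝ) := by
          have := congrArg (fun x : ℕ => (x:ℝ)) hprodfac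
          push_cast at this
          exact this
        simp only [hg, W, hMsum, hprodb, hfacR]
        have hfne : (∏ i : Fin d, ((u i).factorial : ℝ)) ≠ 0 :=
          Finset.prod_ne_zero_iff.mpr fun i _ => Nat.cast_ne_zero.mpr (Nat.factorial_ne_zero _)
        have htne : ((t j : ℝ)) ≠ 0 := Nat.cast_ne_zero.mpr htj
        field_simp
    · rw [if_neg hj]
      refine Finset.sum_eq_zero fun t ht => ?_
      exfalso
      rw [Finset.mem_filter, memA] at ht
      obtain ⟨⟨_, hcond⟩, htj⟩ := ht
      have : (j:ℕ)+1 ≤ ((j:ℕ)+1) * t j := Nat.le_mul_of_pos_right _ (Nat.pos_of_ne_zero htj)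
      have h2 : ((j:ℕ)+1) * t j ≤ s := by
        rw [← hcond]
        exact Finset.single_le_sum (f := fun i : Fin d => ((i:ℕ)+1) * t i)
          (fun i _ => Nat.zero_le _) (Finset.mem_univ j)
      omega
  rw [Finset.sum_congr rfl (fun j _ => stepC j),
    Fin.sum_univ_eq_sum_range (fun j => if j+1 ≤ s then b (j+1) * TT b d (s - (j+1)) else 0) d]
  rw [← Finset.sum_subset (Finset.range_subset_range.mpr hsd)
    (fun x _ hxs => if_neg (by rw [Finset.mem_range] at hxs; omega))]
  exact Finset.sum_congr rfl fun j hj =>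
    if_pos (by rw [Finset.mem_range] at hj; omega)


theorem a_eq_TT (a : ℕ → ℝ) (ha0 : a 0 = 1)
    (harec : ∀ s, 1 ≤ s → a s = ∑ j ∈ Finset.range s, b (j+1) * a (s-(j+1))) :
    ∀ s d, s ≤ d → a s = TT b d s := by
  intro s
  induction s using Nat.strong_induction_on with
  | _ s ih =>
    intro d hsd
    cases s with
    | zero => rw [ha0, TT_zero]
    | succ S =>
      rw [harec (S+1) (by omega), TT_rec b d (S+1) (by omega) hsd]
      refine Finset.sum_congr rfl fun j hj => ?_
      rw [ih (S+1-(j+1)) (by omega) d (by omega)]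


/- The sum ranges over all tuples `(t_1, …, t_k)` of nonnegative integers with
`t_1 + 2 t_2 + ⋯ + k t_k = k`; such tuples necessarily have each `t_j ≤ k`,
so they are faithfully encoded as functions `Fin k → Fin (k+1)`. -/
open Fin.NatCast in
theorem fibonomial_trudi (n k : ℕ) (hk : 1 ≤ k) :
    fibonomial (n + 1) k =
      ∑ t ∈ Finset.univ.filter
          (fun t : Fin k → Fin (k + 1) => ∑ j : Fin k, ((j : ℕ) + 1) * ((t j : ℕ)) = k),
        (((∑ j : Fin k, (t j : ℕ)).factorial : ℝ) / ∏ j : Fin k, ((t j : ℕ).factorial : ℝ)) *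
          (-1 : ℝ) ^ (k * (k - 1) / 2 + k - ∑ j : Fin k, (t j : ℕ)) *
          ∏ j : Fin k, (fibonomial (n + ((j : ℕ) + 1)) n) ^ (t j : ℕ) := by
  classical
  set b : ℕ → ℝ := fun j => (-1:ℝ)^(j-1) * fibonomial (n+j) n with hb
  set a : ℕ → ℝ := fun s => Trudi.E (Trudi.L n) s with ha
  have ha0 : a 0 = 1 := E_zero _
  have harec : ∀ s, 1 ≤ s → a s = ∑ j ∈ Finset.range s, b (j+1) * a (s-(j+1)) := by
    intro s hs
    simp only [ha, hb]
    rw [E_eq_sum (L n) s hs]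
    refine Finset.sum_congr rfl fun j hj => ?_
    rw [H_L n (j+1)]
    simp only [Nat.add_sub_cancel]
  have hmain : Trudi.E (Trudi.L n) k = TT b k k := a_eq_TT b a ha0 harec k k le_rfl
  have hEL := E_L n k
  have hsq : ((-1:ℝ))^(k*(k-1)/2) * (-1:ℝ)^(k*(k-1)/2) = 1 := by
    rw [← mul_pow]; norm_num
  have hfib : fibonomial (n+1) k = (-1:ℝ)^(k*(k-1)/2) * TT b k k := by
    calc fibonomial (n+1) k
        = ((-1:ℝ)^(k*(k-1)/2) * (-1:ℝ)^(k*(k-1)/2)) * fibonomial (n+1) k := by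
          rw [hsq, one_mul]
      _ = (-1:ℝ)^(k*(k-1)/2) * ((-1:ℝ)^(k*(k-1)/2) * fibonomial (n+1) k) := by ring
      _ = (-1:ℝ)^(k*(k-1)/2) * Trudi.E (Trudi.L n) k := by rw [hEL]
      _ = (-1:ℝ)^(k*(k-1)/2) * TT b k k := by rw [hmain]
  rw [hfib, TT, Finset.mul_sum]
  refine Finset.sum_nbij' (fun (t : Fin k → ℕ) (j : Fin k) => ((t j : Fin (k+1))))
    (fun (u : Fin k → Fin (k+1)) (j : Fin k) => (u j : ℕ)) ?_ ?_ ?_ ?_ ?_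
  · -- forward membership
    intro t ht
    rw [Finset.mem_filter, mem_box] at ht
    obtain ⟨hbd, hc⟩ := ht
    rw [Finset.mem_filter]
    refine ⟨Finset.mem_univ _, ?_⟩
    refine Eq.trans ?_ hc
    refine Finset.sum_congr rfl fun j _ => ?_
    show ((j:ℕ)+1) * (((t j : Fin (k+1))) : ℕ) = ((j:ℕ)+1) * t j
    rw [Fin.val_cast_of_lt (hbd j)]
  · -- backward membership
    intro u hu
    rw [Finset.mem_filter] at hu
    rw [Finset.mem_filter, mem_box]
    exact ⟨fun i => (u i).isLt, hu.2⟩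
  · -- left inverse
    intro t ht
    rw [Finset.mem_filter, mem_box] at ht
    funext j
    exact Fin.val_cast_of_lt (ht.1 j)
  · -- right inverse
    intro u hu
    funext j
    exact Fin.cast_val_eq_self (u j)
  · -- weights
    intro t ht
    rw [Finset.mem_filter, mem_box] at ht
    obtain ⟨hbd, hc⟩ := ht
    have hval : ∀ j : Fin k, (((t j : Fin (k+1))) : ℕ) = t j := fun j =>
      Fin.val_cast_of_lt (hbd j)
    have hm : (∑ j : Fin k, t j) ≤ k := by
      calc (∑ j : Fin k, t j) ≤ ∑ j : Fin k, ((j:ℕ)+1) * t j :=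
            Finset.sum_le_sum fun j _ => Nat.le_mul_of_pos_left _ (Nat.succ_pos _)
        _ = k := hc
    have hsplitsum : (∑ j : Fin k, (j:ℕ) * t j) + ∑ j : Fin k, t j = k := by
      rw [← Finset.sum_add_distrib]
      refine Eq.trans ?_ hc
      exact Finset.sum_congr rfl fun j _ => by ring
    simp only [hval, W, hb]
    have hbprod : (∏ j : Fin k, ((-1:ℝ)^(((j:ℕ)+1)-1) * fibonomial (n+((j:ℕ)+1)) n) ^ (t j))
        = (-1:ℝ)^(∑ j : Fin k, (j:ℕ) * t j)
          * ∏ j : Fin k, (fibonomial (n+((j:ℕ)+1)) n) ^ (t j) := by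
      rw [← Finset.prod_pow_eq_pow_sum, ← Finset.prod_mul_distrib]
      refine Finset.prod_congr rfl fun j _ => ?_
      rw [mul_pow, ← pow_mul]
      simp only [Nat.add_sub_cancel]
    rw [hbprod]
    rw [show k*(k-1)/2 + k - ∑ j : Fin k, t j
        = k*(k-1)/2 + (∑ j : Fin k, (j:ℕ) * t j) by omega, pow_add]
    ring
end Trudi

/- The sum ranges over all tuples `(t_1, …, t_k)` of nonnegative integers with
`t_1 + 2 t_2 + ⋯ + k t_k = k`; such tuples necessarily have each `t_j ≤ k`,
so they are faithfully encoded as functions `Fin k → Fin (k+1)`. -/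
theorem fibonomial_trudi (n k : ℕ) (hk : 1 ≤ k) :
    fibonomial (n + 1) k =
      ∑ t ∈ Finset.univ.filter
          (fun t : Fin k → Fin (k + 1) => ∑ j : Fin k, ((j : ℕ) + 1) * ((t j : ℕ)) = k),
        (((∑ j : Fin k, (t j : ℕ)).factorial : ℝ) / ∏ j : Fin k, ((t j : ℕ).factorial : ℝ)) *
          (-1 : ℝ) ^ (k * (k - 1) / 2 + k - ∑ j : Fin k, (t j : ℕ)) *
          ∏ j : Fin k, (fibonomial (n + ((j : ℕ) + 1)) n) ^ (t j : ℕ) := by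
  exact Trudi.fibonomial_trudi n k hk
end
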